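/- arXiv:2008.11581 — 7 statements merged into one kernel-verified Lean document; each statement's English description precedes it below -/
import Mathlib

section
/- Let P be a Markov kernel on a measurable space (E, 𝓔). If P admits more than one invariant probability measure, then P admits two invariant probability measures that are mutually singular. -/
open MeasureTheory ProbabilityTheory
open Set
open scoped ENNReal

/-- `μ` is an invariant probability measure of the Markov kernel `P`:
`μ(A) = ∫ P(x,A) dμ(x)` for all measurable `A`. -/
def IsInvariantMeasure {E : Type*} [MeasurableSpace E] (P : Kernel E E)
    (μ : Measure E) : Prop :=
  ∀ A : Set E, MeasurableSet A → μ A = ∫⁻ x, P x A ∂μ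

/-- Two probability measures are mutually singular if some measurable set has
full measure for the first and zero measure for the second. -/
def MutuallySingularMeasures {E : Type*} [MeasurableSpace E]
    (μ ν : Measure E) : Prop :=
  ∃ C : Set E, MeasurableSet C ∧ μ C = 1 ∧ ν C = 0

section Aux

variable {E : Type*} [MeasurableSpace E]

lemma aux_restrict_le (μ ν : Measure E) {s : Set E} (hs : MeasurableSet s)
    (h1 : ∀ t, MeasurableSet t → t ⊆ s → ν t ≤ μ t) :
    ν.restrict s ≤ μ.restrict s := by
  rw [Measure.le_iff]
  intro A hA
  rw [Measure.restrict_apply hA, Measure.restrict_apply hA]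
  exact h1 _ (hA.inter hs) inter_subset_right

lemma aux_eq_on (μ ν : Measure E) [IsFiniteMeasure μ] {s : Set E} (hs : MeasurableSet s)
    (h1 : ∀ t, MeasurableSet t → t ⊆ s → ν t ≤ μ t) (heq : μ s = ν s) :
    ∀ t, MeasurableSet t → t ⊆ s → μ t = ν t := by
  intro t ht hts
  refine le_antisymm ?_ (h1 t ht hts)
  have hdiff : ν (s \ t) ≤ μ (s \ t) := h1 _ (hs.diff ht) diff_subset
  have hμt : μ t + μ (s \ t) = μ s := by
    have := measure_inter_add_diff (μ := μ) s ht
    rwa [inter_eq_self_of_subset_right hts] at this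
  have hνt : ν t + ν (s \ t) = ν s := by
    have := measure_inter_add_diff (μ := ν) s ht
    rwa [inter_eq_self_of_subset_right hts] at this
  have hsum : μ t + μ (s \ t) ≤ ν t + μ (s \ t) := by
    calc μ t + μ (s \ t) = ν t + ν (s \ t) := by rw [hμt, hνt, heq]
    _ ≤ ν t + μ (s \ t) := add_le_add le_rfl hdiff
  exact ENNReal.le_of_add_le_add_right (measure_ne_top μ _) hsum

/-- The key lemma: the "positive part" of the difference of two invariant
probability measures (w.r.t. a Hahn set `s`) is invariant. -/
lemma invariant_sub (P : Kernel E E) [IsMarkovKernel P]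
    (μ ν : Measure E) [IsProbabilityMeasure μ] [IsProbabilityMeasure ν]
    (hμ : IsInvariantMeasure P μ) (hν : IsInvariantMeasure P ν)
    {s : Set E} (hs : MeasurableSet s)
    (h1 : ∀ t, MeasurableSet t → t ⊆ s → ν t ≤ μ t)
    (h2 : ∀ t, MeasurableSet t → t ⊆ sᶜ → μ t ≤ ν t) :
    IsInvariantMeasure P (μ.restrict s - ν.restrict s) := by
  have hle : ν.restrict s ≤ μ.restrict s := aux_restrict_le μ ν hs h1
  have hle' : μ.restrict sᶜ ≤ ν.restrict sᶜ := aux_restrict_le ν μ hs.compl h2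
  set ρ := μ.restrict s - ν.restrict s with hρ_def
  have hρ_apply : ∀ A, MeasurableSet A → ρ A = μ (A ∩ s) - ν (A ∩ s) := by
    intro A hA
    rw [hρ_def, Measure.sub_apply hA hle, Measure.restrict_apply hA, Measure.restrict_apply hA]
  have hkey : ρ + ν.restrict s = μ.restrict s := Measure.sub_add_cancel_of_le hle
  have hstar : ∀ B, (∫⁻ x, P x B ∂ρ) + ∫⁻ x in s, P x B ∂ν = ∫⁻ x in s, P x B ∂μ := by
    intro B
    rw [← lintegral_add_measure, hkey]
  have hfin : ∀ (τ : Measure E) [IsProbabilityMeasure τ] (t : Set E) (B : Set E),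
      (∫⁻ x in t, P x B ∂τ) ≠ ∞ := by
    intro τ _ t B
    have hb : (∫⁻ x in t, P x B ∂τ) ≤ 1 := by
      calc (∫⁻ x in t, P x B ∂τ) ≤ ∫⁻ _, 1 ∂τ :=
        lintegral_mono' Measure.restrict_le_self (fun x => prob_le_one)
      _ = 1 := by simp
    exact ne_top_of_le_ne_top ENNReal.one_ne_top hb
  -- Step 1: ρ B ≤ ∫ P x B dρ for measurable B ⊆ s
  have step1 : ∀ B, MeasurableSet B → B ⊆ s → ρ B ≤ ∫⁻ x, P x B ∂ρ := by
    intro B hB hBs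
    have hBi : B ∩ s = B := inter_eq_self_of_subset_left hBs
    set a₁ := ∫⁻ x in s, P x B ∂μ with ha₁
    set a₂ := ∫⁻ x in sᶜ, P x B ∂μ with ha₂
    set b₁ := ∫⁻ x in s, P x B ∂ν with hb₁
    set b₂ := ∫⁻ x in sᶜ, P x B ∂ν with hb₂
    have hμB : μ B = a₁ + a₂ := by
      rw [hμ B hB, ← lintegral_add_compl (fun x => P x B) hs]
    have hνB : ν B = b₁ + b₂ := by
      rw [hν B hB, ← lintegral_add_compl (fun x => P x B) hs]
    have ha2b2 : a₂ ≤ b₂ := lintegral_mono' hle' le_rfl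
    have hb1a1 : b₁ ≤ a₁ := lintegral_mono' hle le_rfl
    have hm : (∫⁻ x, P x B ∂ρ) = a₁ - b₁ :=
      ENNReal.eq_sub_of_add_eq (hfin ν s B) (hstar B)
    rw [hρ_apply B hB, hBi, hμB, hνB, hm]
    calc (a₁ + a₂) - (b₁ + b₂) ≤ (a₁ + b₂) - (b₁ + b₂) :=
          tsub_le_tsub_right (add_le_add le_rfl ha2b2) _
    _ = (b₂ + a₁) - (b₂ + b₁) := by rw [add_comm a₁ b₂, add_comm b₁ b₂]
    _ = (b₂ + a₁) - b₂ - b₁ := tsub_add_eq_tsub_tsub _ _ _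
    _ = a₁ - b₁ := by rw [ENNReal.add_sub_cancel_left (hfin ν sᶜ B)]
  -- Step 2: ρ B ≤ ∫ P x B dρ for all measurable B
  have step2 : ∀ B, MeasurableSet B → ρ B ≤ ∫⁻ x, P x B ∂ρ := by
    intro B hB
    have h₀ : ρ B = ρ (B ∩ s) := by
      rw [hρ_apply B hB, hρ_apply (B ∩ s) (hB.inter hs), inter_assoc, inter_self]
    calc ρ B = ρ (B ∩ s) := h₀
    _ ≤ ∫⁻ x, P x (B ∩ s) ∂ρ := step1 _ (hB.inter hs) inter_subset_right
    _ ≤ ∫⁻ x, P x B ∂ρ := lintegral_mono fun x => measure_mono inter_subset_left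
  -- Step 3: equal total masses
  have huniv : (∫⁻ x, P x univ ∂ρ) = ρ univ := by
    simp [measure_univ]
  have hρfin : ρ univ ≠ ∞ := by
    have : ρ univ ≤ μ (univ ∩ s) := by rw [hρ_apply univ .univ]; exact tsub_le_self
    exact ne_top_of_le_ne_top (measure_ne_top μ _) this
  -- conclude
  intro A hA
  refine le_antisymm (step2 A hA) ?_
  have hadd : (∫⁻ x, P x A ∂ρ) + ∫⁻ x, P x Aᶜ ∂ρ = ρ univ := by
    rw [← lintegral_add_left (P.measurable_coe hA)]
    simp_rw [measure_add_measure_compl hA]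
    exact huniv
  have hadd' : ρ A + ρ Aᶜ = ρ univ := measure_add_measure_compl hA
  have hcfin : (∫⁻ x, P x Aᶜ ∂ρ) ≠ ∞ := by
    refine ne_top_of_le_ne_top hρfin ?_
    rw [← hadd]; exact le_add_self
  have : (∫⁻ x, P x A ∂ρ) + ∫⁻ x, P x Aᶜ ∂ρ ≤ ρ A + ∫⁻ x, P x Aᶜ ∂ρ := by
    calc (∫⁻ x, P x A ∂ρ) + ∫⁻ x, P x Aᶜ ∂ρ = ρ A + ρ Aᶜ := by rw [hadd, hadd']
    _ ≤ ρ A + ∫⁻ x, P x Aᶜ ∂ρ := add_le_add le_rfl (step2 Aᶜ hA.compl)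
  exact ENNReal.le_of_add_le_add_right hcfin this

end Aux

/-- If a Markov kernel admits more than one invariant probability measure, then
it admits two mutually singular invariant probability measures. -/
theorem exists_mutually_singular_invariant_of_two_invariant
    {E : Type*} [MeasurableSpace E] (P : Kernel E E) [IsMarkovKernel P]
    (μ ν : Measure E) [IsProbabilityMeasure μ] [IsProbabilityMeasure ν]
    (hμ : IsInvariantMeasure P μ) (hν : IsInvariantMeasure P ν) (hne : μ ≠ ν) :
    ∃ μ' ν' : Measure E, IsProbabilityMeasure μ' ∧ IsProbabilityMeasure ν' ∧
      IsInvariantMeasure P μ' ∧ IsInvariantMeasure P ν' ∧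
      MutuallySingularMeasures μ' ν' := by
  obtain ⟨s, hs, h1, h2⟩ := hahn_decomposition (μ := μ) (ν := ν)
  have hle : ν.restrict s ≤ μ.restrict s := aux_restrict_le μ ν hs h1
  have hle' : μ.restrict sᶜ ≤ ν.restrict sᶜ := aux_restrict_le ν μ hs.compl h2
  have hνμs : ν s ≤ μ s := h1 s hs subset_rfl
  have hμνs : μ sᶜ ≤ ν sᶜ := h2 sᶜ hs.compl subset_rfl
  set c := μ s - ν s with hc_def
  have hc_ne_top : c ≠ ∞ := ne_top_of_le_ne_top (measure_ne_top μ _) tsub_le_self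
  have hμ1 : μ s + μ sᶜ = 1 := by rw [measure_add_measure_compl hs, measure_univ]
  have hν1 : ν s + ν sᶜ = 1 := by rw [measure_add_measure_compl hs, measure_univ]
  have hc_ne_zero : c ≠ 0 := by
    intro h0
    apply hne
    have hsc : μ s = ν s := le_antisymm (tsub_eq_zero_iff_le.mp h0) hνμs
    have hsc' : ν sᶜ = μ sᶜ := by
      have h : μ s + μ sᶜ = μ s + ν sᶜ := by rw [hμ1, hsc, hν1]
      exact ((ENNReal.add_right_inj (measure_ne_top μ s)).mp h).symm
    have e1 := aux_eq_on μ ν hs h1 hsc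
    have e2 := aux_eq_on ν μ hs.compl h2 hsc'
    ext A hA
    have hA1 : μ (A ∩ s) + μ (A \ s) = μ A := measure_inter_add_diff A hs
    have hA2 : ν (A ∩ s) + ν (A \ s) = ν A := measure_inter_add_diff A hs
    rw [← hA1, ← hA2, e1 _ (hA.inter hs) inter_subset_right,
      (e2 _ (hA.diff hs) (fun x hx => hx.2)).symm]
  have hinv1 : IsInvariantMeasure P (μ.restrict s - ν.restrict s) :=
    invariant_sub P μ ν hμ hν hs h1 h2
  have hinv2 : IsInvariantMeasure P (ν.restrict sᶜ - μ.restrict sᶜ) := by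
    refine invariant_sub P ν μ hν hμ hs.compl h2 ?_
    intro t ht hts
    exact h1 t ht (by rwa [compl_compl] at hts)
  set ρ1 := μ.restrict s - ν.restrict s with hρ1def
  set ρ2 := ν.restrict sᶜ - μ.restrict sᶜ with hρ2def
  have hρ1_apply : ∀ A, MeasurableSet A → ρ1 A = μ (A ∩ s) - ν (A ∩ s) := by
    intro A hA
    rw [hρ1def, Measure.sub_apply hA hle, Measure.restrict_apply hA, Measure.restrict_apply hA]
  have hρ2_apply : ∀ A, MeasurableSet A → ρ2 A = ν (A ∩ sᶜ) - μ (A ∩ sᶜ) := by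
    intro A hA
    rw [hρ2def, Measure.sub_apply hA hle', Measure.restrict_apply hA, Measure.restrict_apply hA]
  have hρ1univ : ρ1 univ = c := by rw [hρ1_apply univ .univ, univ_inter]
  have hρ2univ : ρ2 univ = c := by
    rw [hρ2_apply univ .univ, univ_inter]
    -- ν sᶜ - μ sᶜ = μ s - ν s
    have e1 : (ν sᶜ - μ sᶜ) + (μ sᶜ + ν s) = 1 := by
      rw [← add_assoc, tsub_add_cancel_of_le hμνs, add_comm, hν1]
    have e2 : (μ s - ν s) + (μ sᶜ + ν s) = 1 := by
      rw [add_comm (μ sᶜ) (ν s), ← add_assoc, tsub_add_cancel_of_le hνμs, hμ1]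
    have hkfin : (μ sᶜ + ν s) ≠ ∞ :=
      ENNReal.add_ne_top.mpr ⟨measure_ne_top μ _, measure_ne_top ν _⟩
    exact (ENNReal.add_left_inj hkfin).mp (e1.trans e2.symm)
  refine ⟨c⁻¹ • ρ1, c⁻¹ • ρ2, ?_, ?_, ?_, ?_, ?_⟩
  · exact ⟨by rw [Measure.smul_apply, smul_eq_mul, hρ1univ,
      ENNReal.inv_mul_cancel hc_ne_zero hc_ne_top]⟩
  · exact ⟨by rw [Measure.smul_apply, smul_eq_mul, hρ2univ,
      ENNReal.inv_mul_cancel hc_ne_zero hc_ne_top]⟩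
  · intro A hA
    rw [Measure.smul_apply, smul_eq_mul, hinv1 A hA, lintegral_smul_measure, smul_eq_mul]
  · intro A hA
    rw [Measure.smul_apply, smul_eq_mul, hinv2 A hA, lintegral_smul_measure, smul_eq_mul]
  · refine ⟨s, hs, ?_, ?_⟩
    · rw [Measure.smul_apply, smul_eq_mul, hρ1_apply s hs, inter_self,
        ENNReal.inv_mul_cancel hc_ne_zero hc_ne_top]
    · rw [Measure.smul_apply, smul_eq_mul, hρ2_apply s hs, inter_compl_self]
      simp
end

section
/- Let P be a Markov kernel on a measurable space (E, 𝓔) and let μ and ν be two distinct, mutually equivalent invariant probability measures of P. Let f = dμ/dν be a Radon–Nikodym density and set A := {x ∈ E : f(x) > 1}. Then μ(A), ν(A) ∈ (0,1), P(y, Aᶜ) = 0 for ν-almost all y ∈ A, P(y, A) = 0 for ν-almost all y ∈ Aᶜ, and the normalized restricted measures (1/μ(A)) μ|_A and (1/μ(Aᶜ)) μ|_{Aᶜ} are mutually singular invariant probability measures of P. -/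
open MeasureTheory ProbabilityTheory

lemma invariant_smul_aux {E : Type*} [MeasurableSpace E] (P : Kernel E E)
    (μ : Measure E) (h : IsInvariantMeasure P μ) (c : ENNReal) :
    IsInvariantMeasure P (c • μ) := by
  intro B hB
  rw [Measure.smul_apply, lintegral_smul_measure, h B hB, smul_eq_mul]

lemma restrict_invariant_aux {E : Type*} [MeasurableSpace E] (P : Kernel E E)
    [IsMarkovKernel P] (μ : Measure E) [IsFiniteMeasure μ] (hμ : IsInvariantMeasure P μ)
    (S : Set E) (hS : MeasurableSet S)
    (h1 : ∀ᵐ x ∂μ, x ∈ S → P x Sᶜ = 0)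
    (h2 : ∀ᵐ x ∂μ, x ∈ Sᶜ → P x S = 0) :
    IsInvariantMeasure P (μ.restrict S) := by
  intro B hB
  rw [Measure.restrict_apply hB]
  have e1 : ∫⁻ x in S, P x B ∂μ = ∫⁻ x in S, P x (B ∩ S) ∂μ := by
    refine setLIntegral_congr_fun_ae hS ?_
    filter_upwards [h1] with x hx hxS
    have hz : P x (B ∩ Sᶜ) = 0 :=
      measure_mono_null Set.inter_subset_right (hx hxS)
    have := measure_inter_add_diff (μ := P x) B hS
    rw [Set.diff_eq, hz, add_zero] at this
    exact this.symm
  have e2 : ∫⁻ x in Sᶜ, P x (B ∩ S) ∂μ = 0 := by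
    have : ∫⁻ x in Sᶜ, P x (B ∩ S) ∂μ = ∫⁻ x in Sᶜ, 0 ∂μ := by
      refine setLIntegral_congr_fun_ae hS.compl ?_
      filter_upwards [h2] with x hx hxS
      exact measure_mono_null Set.inter_subset_right (hx hxS)
    simpa using this
  have := hμ (B ∩ S) (hB.inter hS)
  rw [← lintegral_add_compl (fun x => P x (B ∩ S)) hS, e2, add_zero] at this
  rw [this, e1]

/-- If `μ ≠ ν` are mutually equivalent invariant probability measures of a Markov
kernel `P`, `f = dμ/dν` and `A = {f > 1}`, then `μ(A), ν(A) ∈ (0,1)`,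
`P(y,Aᶜ) = 0` for ν-a.a. `y ∈ A`, `P(y,A) = 0` for ν-a.a. `y ∈ Aᶜ`, and the
normalized restrictions of `μ` to `A` and to `Aᶜ` are mutually singular
invariant probability measures of `P`. -/
theorem equivalent_invariant_measures_yield_singular_pair
    {E : Type*} [MeasurableSpace E] (P : Kernel E E) [IsMarkovKernel P]
    (μ ν : Measure E) [IsProbabilityMeasure μ] [IsProbabilityMeasure ν]
    (hμ : IsInvariantMeasure P μ) (hν : IsInvariantMeasure P ν)
    (hne : μ ≠ ν) (hμν : μ ≪ ν) (hνμ : ν ≪ μ)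
    (f : E → ENNReal) (hf : Measurable f) (hrn : ν.withDensity f = μ)
    (A : Set E) (hA : A = {x : E | 1 < f x}) :
    (0 < μ A ∧ μ A < 1) ∧ (0 < ν A ∧ ν A < 1) ∧
    (∀ᵐ y ∂ν, y ∈ A → P y Aᶜ = 0) ∧
    (∀ᵐ y ∂ν, y ∈ Aᶜ → P y A = 0) ∧
    IsProbabilityMeasure ((μ A)⁻¹ • μ.restrict A) ∧
    IsProbabilityMeasure ((μ Aᶜ)⁻¹ • μ.restrict Aᶜ) ∧
    IsInvariantMeasure P ((μ A)⁻¹ • μ.restrict A) ∧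
    IsInvariantMeasure P ((μ Aᶜ)⁻¹ • μ.restrict Aᶜ) ∧
    MutuallySingularMeasures ((μ A)⁻¹ • μ.restrict A) ((μ Aᶜ)⁻¹ • μ.restrict Aᶜ) := by
  subst hA
  set A : Set E := {x : E | 1 < f x} with hAdef
  have hAm : MeasurableSet A := measurableSet_lt measurable_const hf
  have hint : ∫⁻ x, f x ∂ν = 1 := by
    rw [← setLIntegral_univ, ← withDensity_apply f MeasurableSet.univ, hrn]
    exact measure_univ
  -- positivity facts
  have hνA : 0 < ν A := by
    rw [pos_iff_ne_zero]; intro h0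
    have hle : f ≤ᵐ[ν] fun _ => 1 := by
      rw [Filter.EventuallyLE, ae_iff]
      have : {x | ¬ f x ≤ 1} = A := by ext x; simp [hAdef, not_le]
      rwa [this]
    have hsub : ∫⁻ x, 1 - f x ∂ν = 0 := by
      rw [lintegral_sub hf (by rw [hint]; exact ENNReal.one_ne_top) hle]
      simp [hint]
    have hz : (fun x => 1 - f x) =ᵐ[ν] 0 :=
      (lintegral_eq_zero_iff (measurable_const.sub hf)).1 hsub
    have hfe : f =ᵐ[ν] fun _ => 1 := by
      filter_upwards [hz, hle] with x h1 h2
      exact le_antisymm h2 (tsub_eq_zero_iff_le.mp h1)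
    exact hne (by rw [← hrn, withDensity_congr_ae hfe]; exact withDensity_one)
  have hνAc : 0 < ν Aᶜ := by
    rw [pos_iff_ne_zero]; intro h0
    have hmem : ∀ᵐ x ∂ν, 1 < f x := by
      rw [ae_iff]
      have hset : {x | ¬ 1 < f x} = Aᶜ := by ext x; simp [hAdef]
      rw [hset]; exact h0
    have hge : (fun _ => (1:ENNReal)) ≤ᵐ[ν] f := by
      filter_upwards [hmem] with x hx; exact hx.le
    have hsub : ∫⁻ x, f x - 1 ∂ν = 0 := by
      rw [lintegral_sub measurable_const (by simp) hge]
      simp [hint]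
    have hz : (fun x => f x - 1) =ᵐ[ν] 0 :=
      (lintegral_eq_zero_iff (hf.sub measurable_const)).1 hsub
    have hF : ∀ᵐ x ∂ν, False := by
      filter_upwards [hz, hmem] with x h1 h2
      exact absurd (tsub_eq_zero_iff_le.mp h1) (not_le.2 h2)
    rw [ae_iff] at hF
    simp at hF
  have hμA : 0 < μ A := by
    rw [pos_iff_ne_zero]; intro h0
    exact absurd (hνμ h0) (ne_of_gt hνA)
  have hμAc : 0 < μ Aᶜ := by
    rw [pos_iff_ne_zero]; intro h0
    exact absurd (hνμ h0) (ne_of_gt hνAc)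
  have hlt : ∀ (ρ : Measure E) [IsProbabilityMeasure ρ], 0 < ρ Aᶜ → ρ A < 1 := by
    intro ρ _ hpos
    refine lt_of_le_of_ne prob_le_one fun h1 => ?_
    have := prob_compl_eq_one_sub (μ := ρ) hAm
    rw [h1] at this; simp at this
    exact absurd this (ne_of_gt hpos)
  -- the minimum measure m and the remainder α
  set g : E → ENNReal := fun x => min (f x) 1 with hgdef
  have hg : Measurable g := hf.min measurable_const
  set m : Measure E := ν.withDensity g with hmdef
  have hm_le_ν : m ≤ ν := by
    have := withDensity_mono (μ := ν) (f := g) (g := fun _ => 1)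
      (Filter.Eventually.of_forall fun x => min_le_right _ _)
    simpa [withDensity_one] using this
  have hm_le_μ : m ≤ μ := by
    rw [← hrn]
    exact withDensity_mono (Filter.Eventually.of_forall fun x => min_le_left _ _)
  have hmB : ∀ B : Set E, MeasurableSet B → m B = ν (B ∩ A) + μ (B ∩ Aᶜ) := by
    intro B hB
    have h1 : m (B ∩ A) = ν (B ∩ A) := by
      rw [hmdef, withDensity_apply g (hB.inter hAm)]
      rw [setLIntegral_congr_fun_ae (hB.inter hAm)
        (Filter.Eventually.of_forall fun x hx => ?_)]
      · exact setLIntegral_one _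
      · exact min_eq_right hx.2.le
    have h2 : m (B ∩ Aᶜ) = μ (B ∩ Aᶜ) := by
      rw [hmdef, withDensity_apply g (hB.inter hAm.compl), ← hrn,
        withDensity_apply f (hB.inter hAm.compl)]
      refine setLIntegral_congr_fun_ae (hB.inter hAm.compl)
        (Filter.Eventually.of_forall fun x hx => ?_)
      exact min_eq_left (not_lt.mp fun hlt => hx.2 hlt)
    rw [← h1, ← h2, ← measure_inter_add_diff B hAm, Set.diff_eq]
  have hm_fin : ∀ s : Set E, m s ≠ ⊤ :=
    fun s => (lt_of_le_of_lt (le_trans (measure_mono (Set.subset_univ _))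
      (hm_le_ν Set.univ)) (by simp [lt_top_iff_ne_top])).ne
  have hI_le : ∀ B : Set E, MeasurableSet B → ∫⁻ x, P x B ∂m ≤ m B := by
    intro B hB
    have hsplit : ∫⁻ x, P x B ∂m
        = ∫⁻ x, P x (B ∩ A) ∂m + ∫⁻ x, P x (B ∩ Aᶜ) ∂m := by
      rw [← lintegral_add_left (P.measurable_coe (hB.inter hAm))]
      refine lintegral_congr fun x => ?_
      rw [← measure_inter_add_diff B hAm, Set.diff_eq]
    rw [hsplit, hmB B hB]
    gcongr
    · calc ∫⁻ x, P x (B ∩ A) ∂m ≤ ∫⁻ x, P x (B ∩ A) ∂ν :=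
            lintegral_mono' hm_le_ν le_rfl
        _ = ν (B ∩ A) := (hν _ (hB.inter hAm)).symm
    · calc ∫⁻ x, P x (B ∩ Aᶜ) ∂m ≤ ∫⁻ x, P x (B ∩ Aᶜ) ∂μ :=
            lintegral_mono' hm_le_μ le_rfl
        _ = μ (B ∩ Aᶜ) := (hμ _ (hB.inter hAm.compl)).symm
  have hm_inv : IsInvariantMeasure P m := by
    intro B hB
    refine le_antisymm ?_ (hI_le B hB)
    have htot : ∫⁻ x, P x B ∂m + ∫⁻ x, P x Bᶜ ∂m = m B + m Bᶜ := by
      rw [← lintegral_add_left (P.measurable_coe hB)]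
      have : ∀ x, P x B + P x Bᶜ = 1 := fun x => by
        rw [measure_add_measure_compl hB]; exact measure_univ
      calc ∫⁻ x, P x B + P x Bᶜ ∂m = ∫⁻ _, 1 ∂m := lintegral_congr fun x => this x
        _ = m Set.univ := by simp
        _ = m B + m Bᶜ := (measure_add_measure_compl hB).symm
    have h2 := hI_le Bᶜ hB.compl
    have hle2 : m B + m Bᶜ ≤ ∫⁻ x, P x B ∂m + m Bᶜ := by
      rw [← htot]
      exact add_le_add le_rfl h2
    exact (ENNReal.add_le_add_iff_right (hm_fin Bᶜ)).mp hle2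
  set h : E → ENNReal := fun x => f x - g x with hhdef
  have hh : Measurable h := hf.sub hg
  set α : Measure E := ν.withDensity h with hαdef
  have hμ_split : μ = m + α := by
    rw [hmdef, hαdef, ← withDensity_add_left hg, ← hrn]
    congr 1
    funext x
    exact (add_tsub_cancel_of_le (min_le_left _ _)).symm
  have hα_inv : IsInvariantMeasure P α := by
    intro B hB
    have e1 : μ B = m B + α B := by rw [hμ_split]; rfl
    have e2 : μ B = m B + ∫⁻ x, P x B ∂α := by
      rw [hμ B hB, hμ_split, lintegral_add_measure, hm_inv B hB]
    rw [e1] at e2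
    exact ENNReal.add_right_inj (hm_fin B) |>.mp e2
  have hαAc : α Aᶜ = 0 := by
    rw [hαdef, withDensity_apply h hAm.compl]
    rw [setLIntegral_congr_fun_ae hAm.compl (Filter.Eventually.of_forall fun x hx => ?_)]
    · exact lintegral_zero
    · show f x - min (f x) 1 = 0
      rw [min_eq_left (not_lt.mp fun hlt => hx hlt)]
      exact tsub_self _
  have key1 : ∀ᵐ y ∂ν, y ∈ A → P y Aᶜ = 0 := by
    have h0 : ∫⁻ x, P x Aᶜ ∂α = 0 := (hα_inv Aᶜ hAm.compl) ▸ hαAc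
    have hae : (fun x => P x Aᶜ) =ᵐ[α] 0 :=
      (lintegral_eq_zero_iff (P.measurable_coe hAm.compl)).1 h0
    rw [Filter.EventuallyEq, ae_iff] at hae
    set N : Set E := {x | ¬ P x Aᶜ = (0 : E → ENNReal) x} with hNdef
    have hNm : MeasurableSet N := by
      have : N = (fun x => P x Aᶜ) ⁻¹' {0}ᶜ := by ext x; simp [hNdef]
      rw [this]
      exact (P.measurable_coe hAm.compl) (measurableSet_singleton 0).compl
    have hint0 : ∫⁻ x in A ∩ N, h x ∂ν = 0 := by
      have : α (A ∩ N) = 0 := measure_mono_null Set.inter_subset_right hae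
      rwa [hαdef, withDensity_apply h (hAm.inter hNm)] at this
    have hν0 : ν (A ∩ N) = 0 := by
      have hz : (∀ᵐ x ∂ν.restrict (A ∩ N), h x = 0) :=
        (lintegral_eq_zero_iff hh).1 hint0
      rw [ae_restrict_iff' (hAm.inter hNm)] at hz
      have hnot : ∀ᵐ x ∂ν, x ∉ A ∩ N := by
        filter_upwards [hz] with x hx hmem
        have h1 : (1:ENNReal) < f x := hmem.1
        have h0' := hx hmem
        rw [hhdef] at h0'
        simp only at h0'
        have hg1 : g x = 1 := min_eq_right h1.le
        rw [hg1] at h0'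
        exact absurd (tsub_eq_zero_iff_le.mp h0') (not_le.2 h1)
      have := ae_iff.mp hnot
      simpa [not_not] using this
    rw [ae_iff]
    refine measure_mono_null (fun x hx => ?_) hν0
    simp only [Set.mem_setOf_eq, Classical.not_imp] at hx
    exact ⟨hx.1, by simpa [hNdef] using hx.2⟩
  have hPA1 : ∀ᵐ x ∂ν, x ∈ A → P x A = 1 := by
    filter_upwards [key1] with x hx hxA
    have := measure_add_measure_compl (μ := P x) hAm
    rw [hx hxA, add_zero] at this
    rw [this]; exact measure_univ
  have e1 : ∫⁻ x in A, P x A ∂ν = ν A := by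
    rw [setLIntegral_congr_fun_ae hAm hPA1]
    exact setLIntegral_one _
  have key2 : ∀ᵐ y ∂ν, y ∈ Aᶜ → P y A = 0 := by
    have e3 : ∫⁻ x in Aᶜ, P x A ∂ν = 0 := by
      have etot : ν A + ∫⁻ x in Aᶜ, P x A ∂ν = ν A + 0 := by
        rw [add_zero]
        conv_lhs => rw [← e1]
        rw [lintegral_add_compl (fun x => P x A) hAm]
        exact (hν A hAm).symm
      exact (ENNReal.add_right_inj (measure_ne_top ν A)).mp etot
    have := (lintegral_eq_zero_iff (P.measurable_coe hAm)).1 e3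
    rw [Filter.EventuallyEq, ae_restrict_iff' hAm.compl] at this
    filter_upwards [this] with x hx hxA
    exact hx hxA
  -- transfer to μ
  have key1μ : ∀ᵐ x ∂μ, x ∈ A → P x Aᶜ = 0 := hμν.ae_le key1
  have key2μ : ∀ᵐ x ∂μ, x ∈ Aᶜ → P x A = 0 := hμν.ae_le key2
  -- probability instances
  have hprobA : IsProbabilityMeasure ((μ A)⁻¹ • μ.restrict A) := by
    constructor
    rw [Measure.smul_apply, Measure.restrict_apply_univ, smul_eq_mul]
    exact ENNReal.inv_mul_cancel (ne_of_gt hμA) (measure_ne_top μ A)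
  have hprobAc : IsProbabilityMeasure ((μ Aᶜ)⁻¹ • μ.restrict Aᶜ) := by
    constructor
    rw [Measure.smul_apply, Measure.restrict_apply_univ, smul_eq_mul]
    exact ENNReal.inv_mul_cancel (ne_of_gt hμAc) (measure_ne_top μ Aᶜ)
  have baseA : IsInvariantMeasure P (μ.restrict A) :=
    restrict_invariant_aux P μ hμ A hAm key1μ key2μ
  have baseAc : IsInvariantMeasure P (μ.restrict Aᶜ) := by
    refine restrict_invariant_aux P μ hμ Aᶜ hAm.compl ?_ ?_
    · simpa [compl_compl] using key2μ
    · simpa [compl_compl] using key1μ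
  have hinvA : IsInvariantMeasure P ((μ A)⁻¹ • μ.restrict A) :=
    invariant_smul_aux P _ baseA _
  have hinvAc : IsInvariantMeasure P ((μ Aᶜ)⁻¹ • μ.restrict Aᶜ) :=
    invariant_smul_aux P _ baseAc _
  have hsing : MutuallySingularMeasures ((μ A)⁻¹ • μ.restrict A)
      ((μ Aᶜ)⁻¹ • μ.restrict Aᶜ) := by
    refine ⟨A, hAm, ?_, ?_⟩
    · rw [Measure.smul_apply, Measure.restrict_apply hAm, Set.inter_self, smul_eq_mul]
      exact ENNReal.inv_mul_cancel (ne_of_gt hμA) (measure_ne_top μ A)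
    · rw [Measure.smul_apply, Measure.restrict_apply hAm, smul_eq_mul]
      simp
  exact ⟨⟨hμA, hlt μ hμAc⟩, ⟨hνA, hlt ν hνAc⟩, key1, key2,
    hprobA, hprobAc, hinvA, hinvAc, hsing⟩
end

section
/- Let P be a Markov kernel on a measurable space (E, 𝓔), let μ and ν be invariant probability measures of P, and let A, B, C ∈ 𝓔 be pairwise disjoint with A ∪ B ∪ C = E, ν(A) = 0, μ(C) = 0, μ(A) > 0, μ(B) > 0, ν(B) > 0, and such that μ restricted to B and ν restricted to B are mutually equivalent. Then P(x, B) = 1 for μ-almost all x ∈ B, and the normalized restricted measures (1/μ(A)) μ|_A and (1/μ(B)) μ|_B are mutually singular invariant probability measures of P. -/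
open MeasureTheory ProbabilityTheory

/-- An invariant null set is a.e. null for the kernel. -/
lemma ae_kernel_zero {E : Type*} [MeasurableSpace E] {P : Kernel E E}
    {μ : Measure E} (hμ : IsInvariantMeasure P μ) {S : Set E}
    (hS : MeasurableSet S) (h0 : μ S = 0) : ∀ᵐ x ∂μ, P x S = 0 := by
  have h := hμ S hS
  rw [h0] at h
  exact (lintegral_eq_zero_iff (P.measurable_coe hS)).mp h.symm

/-- If `D` is a.e. absorbing for the kernel, the normalized restriction to `D`
is again invariant. -/
lemma invariant_restrict {E : Type*} [MeasurableSpace E] {P : Kernel E E}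
    [IsMarkovKernel P] {μ : Measure E} (hμ : IsInvariantMeasure P μ)
    {D : Set E} (hD : MeasurableSet D)
    (h1 : ∀ᵐ x ∂μ.restrict D, P x D = 1)
    (h0 : ∀ᵐ x ∂μ.restrict Dᶜ, P x D = 0) :
    IsInvariantMeasure P ((μ D)⁻¹ • μ.restrict D) := by
  intro S hS
  have key : μ (S ∩ D) = ∫⁻ x in D, P x S ∂μ := by
    have h2 : ∫⁻ x in Dᶜ, P x (S ∩ D) ∂μ = 0 := by
      rw [lintegral_eq_zero_iff (P.measurable_coe (hS.inter hD))]
      filter_upwards [h0] with x hx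
      simpa using le_antisymm (le_trans (measure_mono Set.inter_subset_right) hx.le) zero_le
    have h3 : ∫⁻ x in D, P x (S ∩ D) ∂μ = ∫⁻ x in D, P x S ∂μ := by
      refine lintegral_congr_ae (h1.mono fun x hx => ?_)
      have hcomp : P x Dᶜ = 0 := by
        rw [measure_compl hD (measure_ne_top _ _), hx, measure_univ, tsub_self]
      have hdiff : P x (S \ D) = 0 :=
        le_antisymm (hcomp ▸ measure_mono (Set.diff_subset_iff.mpr (by simp))) zero_le
      have := measure_inter_add_diff (μ := P x) S hD
      rw [hdiff, add_zero] at this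
      exact this
    calc μ (S ∩ D) = ∫⁻ x, P x (S ∩ D) ∂μ := hμ _ (hS.inter hD)
      _ = ∫⁻ x in D, P x (S ∩ D) ∂μ + ∫⁻ x in Dᶜ, P x (S ∩ D) ∂μ :=
          (lintegral_add_compl _ hD).symm
      _ = ∫⁻ x in D, P x S ∂μ := by rw [h2, add_zero, h3]
  rw [Measure.smul_apply, smul_eq_mul, Measure.restrict_apply hS,
    lintegral_smul_measure, key, smul_eq_mul]

/-- If `μ, ν` are invariant probability measures of a Markov kernel `P`, and
`A, B, C` is a measurable partition of `E` with `ν(A) = 0`, `μ(C) = 0`,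
`μ(A) > 0`, `μ(B) > 0`, `ν(B) > 0`, and `μ|_B` and `ν|_B` mutually equivalent,
then `P(x,B) = 1` for μ-a.a. `x ∈ B`, and the normalized restrictions of `μ` to
`A` and to `B` are mutually singular invariant probability measures of `P`. -/
theorem nonequivalent_invariant_measures_yield_singular_pair
    {E : Type*} [MeasurableSpace E] (P : Kernel E E) [IsMarkovKernel P]
    (μ ν : Measure E) [IsProbabilityMeasure μ] [IsProbabilityMeasure ν]
    (hμ : IsInvariantMeasure P μ) (hν : IsInvariantMeasure P ν)
    (A B C : Set E) (hA : MeasurableSet A) (hB : MeasurableSet B)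
    (hC : MeasurableSet C)
    (hAB : Disjoint A B) (hAC : Disjoint A C) (hBC : Disjoint B C)
    (hcover : A ∪ B ∪ C = Set.univ)
    (hνA : ν A = 0) (hμC : μ C = 0)
    (hμA : 0 < μ A) (hμB : 0 < μ B) (hνB : 0 < ν B)
    (hequiv : μ.restrict B ≪ ν.restrict B ∧ ν.restrict B ≪ μ.restrict B) :
    (∀ᵐ x ∂μ, x ∈ B → P x B = 1) ∧
    IsProbabilityMeasure ((μ A)⁻¹ • μ.restrict A) ∧
    IsProbabilityMeasure ((μ B)⁻¹ • μ.restrict B) ∧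
    IsInvariantMeasure P ((μ A)⁻¹ • μ.restrict A) ∧
    IsInvariantMeasure P ((μ B)⁻¹ • μ.restrict B) ∧
    MutuallySingularMeasures ((μ A)⁻¹ • μ.restrict A) ((μ B)⁻¹ • μ.restrict B) := by
  -- decomposition of the total mass of any probability `P x`
  have hsum : ∀ x : E, P x A + P x B + P x C = 1 := by
    intro x
    have h1 : P x (A ∪ B ∪ C) = P x (A ∪ B) + P x C :=
      measure_union (hAC.union_left hBC) hC
    have h2 : P x (A ∪ B) = P x A + P x B := measure_union hAB hB
    rw [hcover, measure_univ, h2] at h1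
    exact h1.symm
  -- the complement of A ∪ B is μ-null
  have hcompl : μ ((A ∪ B)ᶜ) = 0 := by
    have hsub : (A ∪ B)ᶜ ⊆ C := by
      intro x hx
      have : x ∈ A ∪ B ∪ C := hcover ▸ Set.mem_univ x
      rcases this with h | h
      · exact absurd h hx
      · exact h
    exact measure_mono_null hsub hμC
  have hABae : ∀ᵐ x ∂μ, x ∈ A ∪ B := by
    rw [ae_iff]
    convert hcompl using 2
    rfl
  -- splitting lintegrals over the full space into parts over A and B
  have hsplit : ∀ f : E → ENNReal,
      ∫⁻ x, f x ∂μ = ∫⁻ x in A, f x ∂μ + ∫⁻ x in B, f x ∂μ := by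
    intro f
    have h0 : ∫⁻ x in (A ∪ B)ᶜ, f x ∂μ = 0 := by
      rw [Measure.restrict_eq_zero.mpr hcompl, lintegral_zero_measure]
    calc ∫⁻ x, f x ∂μ = ∫⁻ x in A ∪ B, f x ∂μ + ∫⁻ x in (A ∪ B)ᶜ, f x ∂μ :=
          (lintegral_add_compl f (hA.union hB)).symm
      _ = ∫⁻ x in A ∪ B, f x ∂μ := by rw [h0, add_zero]
      _ = ∫⁻ x in A, f x ∂μ + ∫⁻ x in B, f x ∂μ := lintegral_union hB hAB
  -- P x C = 0 μ-a.e.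
  have hPC : ∀ᵐ x ∂μ, P x C = 0 := ae_kernel_zero hμ hC hμC
  -- P x A = 0 ν-a.e.
  have hPAν : ∀ᵐ x ∂ν, P x A = 0 := ae_kernel_zero hν hA hνA
  -- P x A = 0  μ.restrict B - a.e. (via equivalence on B)
  have hPAB : ∀ᵐ x ∂μ.restrict B, P x A = 0 :=
    hequiv.1.ae_le (ae_restrict_of_ae hPAν)
  -- P x B = 1 a.e. on B
  have hPB1B : ∀ᵐ x ∂μ.restrict B, P x B = 1 := by
    filter_upwards [hPAB, ae_restrict_of_ae hPC] with x hx1 hx2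
    have := hsum x
    rwa [hx1, hx2, zero_add, add_zero] at this
  have goal1 : ∀ᵐ x ∂μ, x ∈ B → P x B = 1 :=
    (ae_restrict_iff'₀ hB.nullMeasurableSet).mp hPB1B
  -- ∫_B P x B dμ = μ B
  have hintB : ∫⁻ x in B, P x B ∂μ = μ B := by
    rw [lintegral_congr_ae hPB1B, setLIntegral_one]
  -- ∫_A P x B dμ = 0
  have hintA : ∫⁻ x in A, P x B ∂μ = 0 := by
    have h := hμ B hB
    rw [hsplit (fun x => P x B), hintB] at h
    have h' : ∫⁻ x in A, P x B ∂μ + μ B = 0 + μ B := by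
      rw [zero_add]; exact h.symm
    exact WithTop.add_right_cancel (measure_ne_top μ B) h'
  -- P x B = 0 a.e. on A
  have hPBA : ∀ᵐ x ∂μ.restrict A, P x B = 0 :=
    (lintegral_eq_zero_iff (P.measurable_coe hB)).mp hintA
  -- P x A = 1 a.e. on A
  have hPA1A : ∀ᵐ x ∂μ.restrict A, P x A = 1 := by
    filter_upwards [hPBA, ae_restrict_of_ae hPC] with x hx1 hx2
    have := hsum x
    rwa [hx1, hx2, add_zero, add_zero] at this
  -- absorption hypotheses on complements
  have h0A : ∀ᵐ x ∂μ.restrict Aᶜ, P x A = 0 := by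
    rw [ae_restrict_iff'₀ hA.compl.nullMeasurableSet]
    filter_upwards [hABae, (ae_restrict_iff'₀ hB.nullMeasurableSet).mp hPAB]
      with x hmem hPB hxc
    rcases hmem with h | h
    · exact absurd h hxc
    · exact hPB h
  have h0B : ∀ᵐ x ∂μ.restrict Bᶜ, P x B = 0 := by
    rw [ae_restrict_iff'₀ hB.compl.nullMeasurableSet]
    filter_upwards [hABae, (ae_restrict_iff'₀ hA.nullMeasurableSet).mp hPBA]
      with x hmem hPA hxc
    rcases hmem with h | h
    · exact hPA h
    · exact absurd h hxc
  refine ⟨goal1, ?_, ?_, invariant_restrict hμ hA hPA1A h0A,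
    invariant_restrict hμ hB hPB1B h0B, ?_⟩
  · constructor
    simp [Measure.smul_apply, Measure.restrict_apply_univ,
      ENNReal.inv_mul_cancel hμA.ne' (measure_ne_top μ A)]
  · constructor
    simp [Measure.smul_apply, Measure.restrict_apply_univ,
      ENNReal.inv_mul_cancel hμB.ne' (measure_ne_top μ B)]
  · refine ⟨A, hA, ?_, ?_⟩
    · simp [Measure.smul_apply, Measure.restrict_apply hA,
        ENNReal.inv_mul_cancel hμA.ne' (measure_ne_top μ A)]
    · simp [Measure.smul_apply, Measure.restrict_apply hA,
        Set.disjoint_iff_inter_eq_empty.mp hAB]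
end

section
/- Let (E, d) be a metric space and let μ and ν be mutually singular probability measures on the Borel σ-field of E; let C be a Borel set with μ(C) = 1 and ν(C) = 0. Then for every ε > 0 there exist closed sets A ⊆ C and B ⊆ Cᶜ such that μ(A) > 1 − ε, ν(B) > 1 − ε, and d(A, B) > 0. -/
open MeasureTheory

/-- The distance between two subsets of a metric space, with value `+∞` when
one of the sets is empty: `d(A,B) = inf { d(a,b) : a ∈ A, b ∈ B }`. -/
noncomputable def setDist {E : Type*} [MetricSpace E] (A B : Set E) : ENNReal :=
  ⨅ (a : A) (b : B), ENNReal.ofReal (dist (a : E) (b : E))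

/-- If `μ ⊥ ν` are Borel probability measures on a metric space, witnessed by a
Borel set `C` with `μ(C) = 1`, `ν(C) = 0`, then for every `ε > 0` there are
closed sets `A ⊆ C` and `B ⊆ Cᶜ` with `μ(A) > 1 - ε`, `ν(B) > 1 - ε` and
`d(A,B) > 0`. -/
theorem exists_separated_closed_sets_of_mutually_singular
    {E : Type*} [MetricSpace E] [MeasurableSpace E] [BorelSpace E]
    (μ ν : Measure E) [IsProbabilityMeasure μ] [IsProbabilityMeasure ν]
    (C : Set E) (hC : MeasurableSet C) (hμC : μ C = 1) (hνC : ν C = 0)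
    (ε : ℝ) (hε : 0 < ε) :
    ∃ A B : Set E, IsClosed A ∧ IsClosed B ∧ A ⊆ C ∧ B ⊆ Cᶜ ∧
      μ A > ENNReal.ofReal (1 - ε) ∧ ν B > ENNReal.ofReal (1 - ε) ∧
      0 < setDist A B := by
  have hlt : ENNReal.ofReal (1 - ε) < 1 :=
    ENNReal.ofReal_lt_one.mpr (by linarith)
  -- choose closed B ⊆ Cᶜ with ν B > 1 - ε
  have hνCc : ν Cᶜ = 1 := by
    have := measure_compl hC (measure_ne_top ν C)
    simpa [hνC] using this
  obtain ⟨B, hBsub, hBclosed, hBgt⟩ :=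
    hC.compl.exists_lt_isClosed_of_ne_top (by simp [hνCc]) (hνCc ▸ hlt)
  -- choose closed A ⊆ C with μ A > 1 - ε
  obtain ⟨A, hAsub, hAclosed, hAgt⟩ :=
    hC.exists_lt_isClosed_of_ne_top (by simp [hμC]) (hμC ▸ hlt)
  -- B is nonempty
  have hBne : B.Nonempty := by
    rcases B.eq_empty_or_nonempty with h | h
    · exfalso; rw [h] at hBgt; simp at hBgt
    · exact h
  -- shrink A: A_n = A ∩ {x | 1/(n+1) ≤ infDist x B}
  set An : ℕ → Set E := fun n => A ∩ {x | 1 / (n + 1 : ℝ) ≤ Metric.infDist x B} with hAn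
  have hmono : Monotone An := by
    intro m n hmn x hx
    have h2 : (1 : ℝ) / (n + 1) ≤ 1 / (m + 1) := by
      apply one_div_le_one_div_of_le (by positivity)
      have : (m : ℝ) ≤ n := Nat.cast_le.mpr hmn
      linarith
    exact ⟨hx.1, le_trans h2 hx.2⟩
  have hUnion : (⋃ n, An n) = A := by
    apply Set.Subset.antisymm
    · exact Set.iUnion_subset fun n => Set.inter_subset_left
    · intro x hx
      have hxB : x ∉ B := fun hxB => (hBsub hxB) (hAsub hx)
      have hpos : 0 < Metric.infDist x B :=
        (hBclosed.notMem_iff_infDist_pos hBne).mp hxB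
      obtain ⟨n, hn⟩ := exists_nat_one_div_lt hpos
      exact Set.mem_iUnion.mpr ⟨n, hx, hn.le⟩
  have htend := tendsto_measure_iUnion_atTop (μ := μ) hmono
  rw [hUnion] at htend
  obtain ⟨n, hn⟩ := (htend.eventually (lt_mem_nhds hAgt)).exists
  refine ⟨An n, B, ?_, hBclosed, fun x hx => hAsub hx.1, hBsub, hn, hBgt, ?_⟩
  · exact hAclosed.inter <| IsClosed.preimage (Metric.continuous_infDist_pt B) isClosed_Ici
  · have : ENNReal.ofReal (1 / (n + 1 : ℝ)) ≤ setDist (An n) B := by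
      refine le_iInf fun a => le_iInf fun b => ?_
      apply ENNReal.ofReal_le_ofReal
      calc (1 : ℝ) / (n + 1) ≤ Metric.infDist (a : E) B := a.2.2
        _ ≤ dist (a : E) (b : E) := Metric.infDist_le_dist_of_mem b.2
    refine lt_of_lt_of_le ?_ this
    exact ENNReal.ofReal_pos.mpr (by positivity)
end

section
/- Let P be a Markov kernel on a measurable space (E, 𝓔), let f : E → ℝ be bounded and measurable, and let γ ∈ ℝ. Define ψ_γ(x) = ℙ_x( liminf_{n→∞} (1/n) ∑_{i=0}^{n−1} f(X_i) ≥ γ ). Then ψ_γ is harmonic for P, i.e. ψ_γ(x) = ∫ ψ_γ(y) P(x, dy) for every x ∈ E; consequently, if μ is an invariant probability measure of P and (X_n) is the stationary chain with initial law μ, then (ψ_γ(X_n))_{n ∈ ℕ₀} is a bounded martingale with respect to the filtration generated by (X_n). -/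
open MeasureTheory ProbabilityTheory Filter
open scoped ENNReal

/-- Prepend a point to a trajectory. -/
def consTraj {E : Type*} (x : E) (ω : ℕ → E) : ℕ → E :=
  fun n => Nat.casesOn n x ω

/-- `ℙP : E → Measure (ℕ → E)` is the family of laws of the Markov chain with
kernel `P`. -/
def IsChainLaw {E : Type*} [MeasurableSpace E] (P : Kernel E E)
    (ℙP : E → Measure (ℕ → E)) : Prop :=
  (∀ x, IsProbabilityMeasure (ℙP x)) ∧
    ∀ x, ℙP x = (P x).bind (fun y => (ℙP y).map (consTraj x))

/-- The filtration on path space generated by the coordinate process. -/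
def coordFiltration (E : Type*) [m : MeasurableSpace E] :
    Filtration ℕ (MeasurableSpace.pi : MeasurableSpace (ℕ → E)) where
  seq n := ⨆ i ∈ Set.Iic n, MeasurableSpace.comap (fun ω : ℕ → E => ω i) m
  mono' a b hab := biSup_mono (Set.Iic_subset_Iic.mpr hab)
  le' n := by
    refine iSup_le fun i => iSup_le fun _ => ?_
    exact measurable_iff_comap_le.mp (measurable_pi_apply i)

section AuxAnalysis

/-- Bound on Cesàro averages of a bounded sequence. -/
lemma avg_abs_le {a : ℕ → ℝ} {C : ℝ} (hC : 0 ≤ C) (h : ∀ i, |a i| ≤ C) (n : ℕ) :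
    |(∑ i ∈ Finset.range n, a i) / n| ≤ C := by
  rcases Nat.eq_zero_or_pos n with rfl | hn
  · simpa using hC
  · have h1 : |∑ i ∈ Finset.range n, a i| ≤ n * C := by
      calc |∑ i ∈ Finset.range n, a i| ≤ ∑ i ∈ Finset.range n, |a i| :=
        Finset.abs_sum_le_sum_abs _ _
      _ ≤ ∑ _i ∈ Finset.range n, C := Finset.sum_le_sum fun i _ => h i
      _ = n * C := by simp [mul_comm]
    rw [abs_div, abs_of_pos (show (0:ℝ) < n by exact_mod_cast hn)]
    rw [div_le_iff₀ (show (0:ℝ) < n by exact_mod_cast hn)]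
    linarith [h1]

lemma liminf_le_of_eq_add {z g e : ℕ → ℝ} (hg : ∀ n, g n = z n + e n)
    (he : Tendsto e atTop (nhds 0))
    {C : ℝ} (hz : ∀ n, |z n| ≤ C) (hgb : ∀ n, |g n| ≤ C) :
    liminf z atTop ≤ liminf g atTop := by
  have hb1 : IsBoundedUnder (· ≥ ·) atTop z := isBoundedUnder_of ⟨-C, fun n => (abs_le.1 (hz n)).1⟩
  have hc1 : IsCoboundedUnder (· ≥ ·) atTop z :=
    IsBoundedUnder.isCoboundedUnder_ge (isBoundedUnder_of ⟨C, fun n => (abs_le.1 (hz n)).2⟩)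
  have hb2 : IsBoundedUnder (· ≥ ·) atTop g := isBoundedUnder_of ⟨-C, fun n => (abs_le.1 (hgb n)).1⟩
  have hc2 : IsCoboundedUnder (· ≥ ·) atTop g :=
    IsBoundedUnder.isCoboundedUnder_ge (isBoundedUnder_of ⟨C, fun n => (abs_le.1 (hgb n)).2⟩)
  refine (le_liminf_iff hc2 hb2).2 fun y hy => ?_
  obtain ⟨d, hyd, hdl⟩ := exists_between hy
  have h1 : ∀ᶠ n in atTop, d < z n := (le_liminf_iff hc1 hb1).1 le_rfl d hdl
  have h2 : ∀ᶠ n in atTop, |e n| < d - y := by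
    have := Metric.tendsto_nhds.mp he (d - y) (by linarith)
    simpa [Real.dist_eq] using this
  filter_upwards [h1, h2] with n hn1 hn2
  have := abs_lt.1 hn2
  rw [hg n]; linarith

lemma liminf_avg_cons {E : Type*} {f : E → ℝ} {Cf : ℝ} (h : ∀ x, |f x| ≤ Cf)
    (x : E) (ω : ℕ → E) :
    liminf (fun n : ℕ => (∑ i ∈ Finset.range n, f (consTraj x ω i)) / n) atTop
      = liminf (fun n : ℕ => (∑ i ∈ Finset.range n, f (ω i)) / n) atTop := by
  have hC0 : 0 ≤ Cf := le_trans (abs_nonneg _) (h x)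
  set u : ℕ → ℝ := fun n => (∑ i ∈ Finset.range n, f (ω i)) / n with hu_def
  set v : ℕ → ℝ := fun n => (∑ i ∈ Finset.range n, f (consTraj x ω i)) / n with hv_def
  have hu : ∀ n, |u n| ≤ Cf := avg_abs_le hC0 (fun i => h (ω i))
  have hv : ∀ n, |v n| ≤ Cf := avg_abs_le hC0 (fun i => h (consTraj x ω i))
  set e : ℕ → ℝ := fun n => (f x - u n) / (n + 1) with he_def
  have hnu : ∀ n : ℕ, (n : ℝ) * u n = ∑ i ∈ Finset.range n, f (ω i) := by
    intro n
    rcases Nat.eq_zero_or_pos n with rfl | hn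
    · simp
    · have : (n : ℝ) ≠ 0 := by exact_mod_cast hn.ne'
      simp only [hu_def]
      field_simp
  have hsum : ∀ n : ℕ, ∑ i ∈ Finset.range (n + 1), f (consTraj x ω i)
      = (∑ i ∈ Finset.range n, f (ω i)) + f x := by
    intro n
    rw [Finset.sum_range_succ']
    rfl
  have hvn : ∀ n : ℕ, v (n + 1) = u n + e n := by
    intro n
    have hne : ((n : ℝ) + 1) ≠ 0 := by positivity
    simp only [hv_def, he_def, hsum n, ← hnu n]
    push_cast
    field_simp
    ring
  have he : Tendsto e atTop (nhds 0) := by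
    apply squeeze_zero_norm (a := fun n : ℕ => (2 * Cf) / (n + 1))
    · intro n
      simp only [he_def, norm_div, Real.norm_eq_abs]
      rw [abs_of_pos (show (0:ℝ) < (n:ℝ) + 1 by positivity)]
      apply div_le_div_of_nonneg_right ?_ (by positivity)
      calc |f x - u n| ≤ |f x| + |u n| := abs_sub _ _
        _ ≤ Cf + Cf := add_le_add (h x) (hu n)
        _ = 2 * Cf := by ring
    · have := (tendsto_add_atTop_iff_nat 1).2 (tendsto_const_div_atTop_nhds_zero_nat (2 * Cf))
      refine this.congr fun n => ?_
      push_cast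
      ring
  have h1 : liminf u atTop ≤ liminf v atTop := by
    have := liminf_le_of_eq_add (g := fun n => v (n + 1)) (fun n => hvn n) he hu (fun n => hv _)
    rwa [liminf_nat_add v 1] at this
  have h2 : liminf v atTop ≤ liminf u atTop := by
    have hrel : ∀ n, u n = v (n + 1) + (-(e n)) := fun n => by rw [hvn n]; ring
    have := liminf_le_of_eq_add (z := fun n => v (n + 1)) hrel (by simpa using he.neg)
      (fun n => hv _) hu
    rwa [liminf_nat_add v 1] at this
  exact le_antisymm h2 h1

end AuxAnalysis

section AuxMeasure

open MeasureTheory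

variable {α β : Type*} [MeasurableSpace α] [MeasurableSpace β]

lemma bind_eq_bind_mk {m : Measure α} {f : α → Measure β} (hf : AEMeasurable f m) :
    m.bind f = m.bind (hf.mk f) := by
  unfold Measure.bind
  rw [Measure.map_congr hf.ae_eq_mk]

lemma bind_apply_ae {m : Measure α} {f : α → Measure β} {s : Set β} (hs : MeasurableSet s)
    (hf : AEMeasurable f m) : m.bind f s = ∫⁻ a, f a s ∂m := by
  rw [bind_eq_bind_mk hf, Measure.bind_apply hs hf.measurable_mk.aemeasurable]
  exact (lintegral_congr_ae (hf.ae_eq_mk.mono fun a ha => by rw [ha])).symm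

lemma lintegral_bind_ae {m : Measure α} {f : α → Measure β} (hf : AEMeasurable f m)
    {g : β → ℝ≥0∞} (hg : Measurable g) :
    ∫⁻ x, g x ∂(m.bind f) = ∫⁻ a, ∫⁻ x, g x ∂(f a) ∂m := by
  rw [bind_eq_bind_mk hf, Measure.lintegral_bind hf.measurable_mk.aemeasurable hg.aemeasurable]
  exact (lintegral_congr_ae (hf.ae_eq_mk.mono fun a ha => by rw [ha])).symm

end AuxMeasure

section AuxChain

open MeasureTheory

variable {E : Type*} [MeasurableSpace E] {P : ProbabilityTheory.Kernel E E}
  {ℙP : E → Measure (ℕ → E)}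

lemma measurable_consTraj_pair : Measurable (fun p : E × (ℕ → E) => consTraj p.1 p.2) := by
  apply measurable_pi_lambda
  intro n
  cases n with
  | zero => exact measurable_fst
  | succ m => exact (measurable_pi_apply m).comp measurable_snd

lemma measurable_consTraj (x : E) : Measurable (consTraj x) :=
  measurable_consTraj_pair.comp (measurable_const.prodMk measurable_id)

lemma chain_aemeas (hℙ : IsChainLaw P ℙP) (x : E) :
    AEMeasurable (fun y => (ℙP y).map (consTraj x)) (P x) := by
  by_contra h
  have h2 := hℙ.2 x
  rw [Measure.bind, Measure.map_of_not_aemeasurable h, Measure.join_zero] at h2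
  have h1 := (hℙ.1 x).measure_univ
  rw [h2] at h1
  simp at h1

lemma chain_lintegral (hℙ : IsChainLaw P ℙP) (x : E) {g : (ℕ → E) → ℝ≥0∞}
    (hg : Measurable g) :
    ∫⁻ ω, g ω ∂ℙP x = ∫⁻ y, ∫⁻ ω, g (consTraj x ω) ∂ℙP y ∂P x := by
  conv_lhs => rw [hℙ.2 x]
  rw [lintegral_bind_ae (chain_aemeas hℙ x) hg]
  exact lintegral_congr fun y => lintegral_map hg (measurable_consTraj x)

end AuxChain

section AuxMeas2

open MeasureTheory ProbabilityTheory

universe u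

variable {E : Type u} [MeasurableSpace E] {P : Kernel E E} [IsMarkovKernel P]
  {ℙP : E → Measure (ℕ → E)}

lemma chain_meas_aux (hℙ : IsChainLaw P ℙP) :
    ∀ n : ℕ, ∀ {D : Type u} [MeasurableSpace D] (G : D × (ℕ → E) → ℝ≥0∞),
      Measurable G → (∀ d ω ω', (∀ k, k ≤ n → ω k = ω' k) → G (d, ω) = G (d, ω')) →
      Measurable (fun p : D × E => ∫⁻ ω, G (p.1, ω) ∂ℙP p.2) := by
  intro n
  induction n with
  | zero =>
    intro D _ G hG hdep
    have key : ∀ p : D × E, ∫⁻ ω, G (p.1, ω) ∂ℙP p.2 = G (p.1, fun _ => p.2) := by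
      rintro ⟨d, x⟩
      show ∫⁻ ω, G (d, ω) ∂ℙP x = G (d, fun _ => x)
      rw [chain_lintegral hℙ x (show Measurable fun ω => G (d, ω) from
        hG.comp measurable_prodMk_left)]
      have h1 : ∀ ω : ℕ → E, G (d, consTraj x ω) = G (d, fun _ => x) := by
        intro ω
        refine hdep d _ _ fun k hk => ?_
        rcases Nat.le_zero.mp hk
        rfl
      simp only [h1]
      simp [lintegral_const, (hℙ.1 _).measure_univ, measure_univ]
    simp only [key]
    exact hG.comp (measurable_fst.prodMk (measurable_pi_lambda _ fun _ => measurable_snd))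
  | succ n ih =>
    intro D _ G hG hdep
    set G' : (D × E) × (ℕ → E) → ℝ≥0∞ := fun q => G (q.1.1, consTraj q.1.2 q.2) with hG'def
    have hG' : Measurable G' :=
      hG.comp ((measurable_fst.comp measurable_fst).prodMk
        (measurable_consTraj_pair.comp ((measurable_snd.comp measurable_fst).prodMk
          measurable_snd)))
    have hdep' : ∀ d ω ω', (∀ k, k ≤ n → ω k = ω' k) → G' (d, ω) = G' (d, ω') := by
      rintro ⟨d, x⟩ ω ω' hagree
      refine hdep d _ _ fun k hk => ?_
      cases k with
      | zero => rfl
      | succ j => exact hagree j (Nat.succ_le_succ_iff.mp hk)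
    have hm := ih G' hG' hdep'
    let κ : Kernel (D × E) E := P.comap (Prod.snd : D × E → E) measurable_snd
    have key : ∀ p : D × E, ∫⁻ ω, G (p.1, ω) ∂ℙP p.2
        = ∫⁻ y, ∫⁻ ω, G' ((p.1, p.2), ω) ∂ℙP y ∂κ p := by
      rintro ⟨d, x⟩
      show ∫⁻ ω, G (d, ω) ∂ℙP x = _
      rw [chain_lintegral hℙ x (show Measurable fun ω => G (d, ω) from
        hG.comp measurable_prodMk_left)]
      rfl
    simp only [key]
    exact Measurable.lintegral_kernel_prod_right' (κ := κ) hm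

lemma chain_meas (hℙ : IsChainLaw P ℙP) {B : Set (ℕ → E)} (hB : MeasurableSet B) :
    Measurable (fun x => ℙP x B) := by
  refine MeasurableSpace.induction_on_inter
    (C := fun B _ => Measurable fun x => ℙP x B)
    (MeasureTheory.generateFrom_measurableCylinders.symm)
    MeasureTheory.isPiSystem_measurableCylinders ?_ ?_ ?_ ?_ B hB
  · simp
  · intro t ht
    obtain ⟨s, S, hS, rfl⟩ := (MeasureTheory.mem_measurableCylinders _).mp ht
    have htm : MeasurableSet (MeasureTheory.cylinder (α := fun _ => E) s S) :=
      MeasurableSet.of_mem_measurableCylinders ht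
    set n := s.sup id with hn
    set G : E × (ℕ → E) → ℝ≥0∞ := fun q => (MeasureTheory.cylinder (α := fun _ => E) s S).indicator 1 q.2
      with hGdef
    have hG : Measurable G := (measurable_one.indicator htm).comp measurable_snd
    have hdep : ∀ (d : E) ω ω', (∀ k, k ≤ n → ω k = ω' k) → G (d, ω) = G (d, ω') := by
      intro d ω ω' hagree
      have hmem : ω ∈ MeasureTheory.cylinder (α := fun _ => E) s S ↔ ω' ∈ MeasureTheory.cylinder (α := fun _ => E) s S := by
        rw [MeasureTheory.mem_cylinder, MeasureTheory.mem_cylinder]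
        have : s.restrict ω = s.restrict ω' :=
          funext fun i => hagree i (Finset.le_sup (f := id) i.2)
        rw [this]
      simp only [hGdef, Set.indicator]
      by_cases hω : ω ∈ MeasureTheory.cylinder (α := fun _ => E) s S
      · rw [if_pos hω, if_pos (hmem.mp hω)]; rfl
      · rw [if_neg hω, if_neg (fun h => hω (hmem.mpr h))]
    have hmm := chain_meas_aux hℙ n G hG hdep
    have heq : (fun x => ℙP x (MeasureTheory.cylinder (α := fun _ => E) s S))
        = (fun p : E × E => ∫⁻ ω, G (p.1, ω) ∂ℙP p.2) ∘ (fun x => (x, x)) := by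
      funext x
      simp only [Function.comp_apply, hGdef]
      rw [lintegral_indicator_one htm]
    rw [heq]
    exact hmm.comp (measurable_id.prodMk measurable_id)
  · intro t htm iht
    have : ∀ x, ℙP x tᶜ = 1 - ℙP x t := by
      intro x
      have := hℙ.1 x
      rw [measure_compl htm (measure_ne_top _ _), measure_univ]
    simp only [this]
    exact measurable_const.sub iht
  · intro g hdisj hgm ihg
    have : ∀ x, ℙP x (⋃ i, g i) = ∑' i, ℙP x (g i) := fun x => measure_iUnion hdisj hgm
    simp only [this]
    exact Measurable.ennreal_tsum ihg

end AuxMeas2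

/-- `ψ_γ(x) = ℙ_x(liminf (1/n) ∑_{i<n} f(X_i) ≥ γ)` is harmonic for `P`, i.e.
`ψ_γ(x) = ∫ ψ_γ(y) P(x,dy)` for all `x`; consequently, if `μ` is an invariant
probability measure of `P`, then `(ψ_γ(X_n))_n` is a bounded martingale under
the law of the stationary chain with initial law `μ`, with respect to the
filtration generated by the coordinates. -/
theorem psi_gamma_harmonic_and_martingale
    {E : Type*} [MeasurableSpace E] (P : Kernel E E) [IsMarkovKernel P]
    (ℙP : E → Measure (ℕ → E)) (hℙ : IsChainLaw P ℙP)
    (f : E → ℝ) (hf : Measurable f) (hbdd : ∃ Cf : ℝ, ∀ x, |f x| ≤ Cf)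
    (γ : ℝ)
    (ψ : E → ENNReal)
    (hψ : ∀ x, ψ x = ℙP x {ω : ℕ → E |
      γ ≤ liminf (fun n : ℕ => (∑ i ∈ Finset.range n, f (ω i)) / n) atTop})
    (μ : Measure E) [IsProbabilityMeasure μ] (hμ : IsInvariantMeasure P μ) :
    (∀ x, ψ x = ∫⁻ y, ψ y ∂(P x)) ∧
    Martingale (fun (n : ℕ) (ω : ℕ → E) => (ψ (ω n)).toReal)
      (coordFiltration E) (μ.bind ℙP) ∧
    (∃ C : ℝ, ∀ (n : ℕ) (ω : ℕ → E), |(ψ (ω n)).toReal| ≤ C) := by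
  obtain ⟨Cf, hCf⟩ := hbdd
  have hℙ' : IsChainLaw P ℙP := hℙ
  set A : Set (ℕ → E) := {ω : ℕ → E |
      γ ≤ liminf (fun n : ℕ => (∑ i ∈ Finset.range n, f (ω i)) / n) atTop} with hA
  have hAmeas : MeasurableSet A := by
    have hmeas : Measurable fun ω : ℕ → E =>
        liminf (fun n : ℕ => (∑ i ∈ Finset.range n, f (ω i)) / n) atTop := by
      apply Measurable.liminf
      intro n
      exact (Finset.measurable_sum _ fun i _ => hf.comp (measurable_pi_apply i)).div_const _
    exact measurableSet_le measurable_const hmeas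
  have hAinv : ∀ x, consTraj x ⁻¹' A = A := by
    intro x; ext ω
    simp only [Set.mem_preimage, hA, Set.mem_setOf_eq, liminf_avg_cons hCf x ω]
  have hψA : ψ = fun x => ℙP x A := funext hψ
  have hψm : Measurable ψ := by rw [hψA]; exact chain_meas hℙ' hAmeas
  have hψev : ∀ m : ℕ, Measurable fun ω : ℕ → E => ψ (ω m) :=
    fun m => hψm.comp (measurable_pi_apply m)
  have hψ1 : ∀ x, ψ x ≤ 1 := fun x => by
    have := hℙ'.1 x
    rw [hψ x]; exact prob_le_one
  have hPmeas : Measurable ℙP :=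
    Measure.measurable_of_measurable_coe _ fun s hs => chain_meas hℙ' hs
  have hmapmeas : ∀ x : E, Measurable fun y => (ℙP y).map (consTraj x) := fun x =>
    (Measure.measurable_map _ (measurable_consTraj x)).comp hPmeas
  have harmonic : ∀ x, ψ x = ∫⁻ y, ψ y ∂P x := by
    intro x
    conv_lhs => rw [hψA]
    simp only
    conv_lhs => rw [hℙ'.2 x]
    rw [Measure.bind_apply hAmeas (hmapmeas x).aemeasurable]
    refine lintegral_congr fun y => ?_
    rw [Measure.map_apply (measurable_consTraj x) hAmeas, hAinv x]
    exact (congrFun hψA y).symm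
  have lemA : ∀ (m : ℕ) (x : E), ∫⁻ ω, ψ (ω m) ∂ℙP x = ψ x := by
    intro m
    induction m with
    | zero =>
      intro x
      rw [chain_lintegral hℙ' x (hψev 0)]
      have h0 : ∀ y : E, ∫⁻ ω, ψ (consTraj x ω 0) ∂ℙP y = ψ x := by
        intro y
        have := hℙ'.1 y
        show ∫⁻ _, ψ x ∂ℙP y = ψ x
        rw [lintegral_const, measure_univ, mul_one]
      rw [lintegral_congr h0, lintegral_const, measure_univ, mul_one]
    | succ m ih =>
      intro x
      rw [chain_lintegral hℙ' x (hψev (m+1))]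
      have h1 : ∀ y : E, ∫⁻ ω, ψ (consTraj x ω (m+1)) ∂ℙP y = ψ y := fun y => ih y
      rw [lintegral_congr h1]
      exact (harmonic x).symm
  have lemC : ∀ (i : ℕ) (g : (ℕ → E) → ℝ≥0∞), Measurable g →
      (∀ ω ω', (∀ k, k ≤ i → ω k = ω' k) → g ω = g ω') →
      ∀ (k : ℕ) (x : E),
        ∫⁻ ω, g ω * ψ (ω (i + k)) ∂ℙP x = ∫⁻ ω, g ω * ψ (ω i) ∂ℙP x := by
    intro i
    induction i with
    | zero =>
      intro g hg hdep k x
      cases k with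
      | zero => rfl
      | succ m =>
        have hmul : ∀ j : ℕ, Measurable fun ω : ℕ → E => g ω * ψ (ω j) :=
          fun j => hg.mul (hψev j)
        simp only [Nat.zero_add]
        rw [chain_lintegral hℙ' x (hmul (m+1)), chain_lintegral hℙ' x (hmul 0)]
        have hgc : ∀ ω, g (consTraj x ω) = g (fun _ => x) := fun ω =>
          hdep _ _ fun k hk => by rcases Nat.le_zero.mp hk; rfl
        have h1 : ∀ y : E, ∫⁻ ω, g (consTraj x ω) * ψ (consTraj x ω (m+1)) ∂ℙP y
            = g (fun _ => x) * ψ y := by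
          intro y
          have heq : (fun ω => g (consTraj x ω) * ψ (consTraj x ω (m+1)))
              = fun ω => g (fun _ => x) * ψ (ω m) := funext fun ω => by rw [hgc ω]; rfl
          rw [heq, lintegral_const_mul _ (hψev m), lemA m y]
        have h2 : ∀ y : E, ∫⁻ ω, g (consTraj x ω) * ψ (consTraj x ω 0) ∂ℙP y
            = g (fun _ => x) * ψ x := by
          intro y
          have := hℙ'.1 y
          have heq : (fun ω => g (consTraj x ω) * ψ (consTraj x ω 0))
              = fun _ => g (fun _ => x) * ψ x := funext fun ω => by rw [hgc ω]; rfl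
          rw [heq, lintegral_const, measure_univ, mul_one]
        rw [lintegral_congr h1, lintegral_congr h2,
          lintegral_const_mul _ hψm, ← harmonic x, lintegral_const, measure_univ, mul_one]
    | succ n ih =>
      intro g hg hdep k x
      cases k with
      | zero => rfl
      | succ m =>
        have hmul : ∀ j : ℕ, Measurable fun ω : ℕ → E => g ω * ψ (ω j) :=
          fun j => hg.mul (hψev j)
        rw [chain_lintegral hℙ' x (hmul ((n+1) + (m+1))), chain_lintegral hℙ' x (hmul (n+1))]
        refine lintegral_congr fun y => ?_
        have hdep' : ∀ ω ω', (∀ k, k ≤ n → ω k = ω' k) →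
            g (consTraj x ω) = g (consTraj x ω') := by
          intro ω ω' hagree
          refine hdep _ _ fun k hk => ?_
          cases k with
          | zero => rfl
          | succ j => exact hagree j (Nat.succ_le_succ_iff.mp hk)
        have hg' : Measurable fun ω => g (consTraj x ω) := hg.comp (measurable_consTraj x)
        have harith : n + 1 + (m + 1) = (n + (m + 1)) + 1 := by omega
        rw [harith]
        exact ih (fun ω => g (consTraj x ω)) hg' hdep' (m+1) y
  -- determination of coordFiltration-measurable sets by first coordinates
  have hdet : ∀ (i : ℕ) (s : Set (ℕ → E)), MeasurableSet[(coordFiltration E) i] s →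
      ∀ ω ω', (∀ k, k ≤ i → ω k = ω' k) → (ω ∈ s ↔ ω' ∈ s) := by
    intro i s hs ω ω' hagree
    have hle : ((coordFiltration E) i : MeasurableSpace (ℕ → E)) ≤
        MeasurableSpace.comap (fun (ω : ℕ → E) (k : ℕ) => ω (min k i)) MeasurableSpace.pi := by
      refine iSup_le fun k => iSup_le fun hk => ?_
      have heq : (fun ω : ℕ → E => ω k)
          = (fun σ : ℕ → E => σ k) ∘ (fun (ω : ℕ → E) (k' : ℕ) => ω (min k' i)) := by
        funext ω; simp [min_eq_left (Set.mem_Iic.mp hk)]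
      rw [heq, ← MeasurableSpace.comap_comp]
      exact MeasurableSpace.comap_mono (measurable_iff_comap_le.mp (measurable_pi_apply k))
    obtain ⟨t, -, rfl⟩ := hle s hs
    have heq : (fun k => ω (min k i)) = fun k => ω' (min k i) :=
      funext fun k => hagree _ (min_le_right k i)
    simp only [Set.mem_preimage, heq]
  have hevalF : ∀ n : ℕ, Measurable[(coordFiltration E) n] fun ω : ℕ → E => ω n := by
    intro n
    rw [measurable_iff_comap_le]
    have h := le_biSup
      (fun k => MeasurableSpace.comap (fun ω : ℕ → E => ω k) (inferInstance : MeasurableSpace E))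
      (Set.mem_Iic.mpr (le_rfl : n ≤ n))
    exact h
  set ν : Measure (ℕ → E) := μ.bind ℙP with hν
  have hνprob : IsProbabilityMeasure ν := by
    constructor
    rw [hν, Measure.bind_apply MeasurableSet.univ hPmeas.aemeasurable]
    have : ∀ x : E, ℙP x Set.univ = 1 := fun x => (hℙ'.1 x).measure_univ
    simp only [this]
    simp
  have hkey : ∀ (i j : ℕ), i ≤ j → ∀ s : Set (ℕ → E),
      MeasurableSet[(coordFiltration E) i] s →
      ∫⁻ ω in s, ψ (ω j) ∂ν = ∫⁻ ω in s, ψ (ω i) ∂ν := by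
    intro i j hij s hs
    have hsamb : MeasurableSet s := (coordFiltration E).le i s hs
    set g : (ℕ → E) → ℝ≥0∞ := s.indicator 1 with hgdef
    have hgmeas : Measurable g := measurable_one.indicator hsamb
    have hgdep : ∀ ω ω', (∀ k, k ≤ i → ω k = ω' k) → g ω = g ω' := by
      intro ω ω' hag
      have hiff := hdet i s hs ω ω' hag
      simp only [hgdef, Set.indicator]
      by_cases hω : ω ∈ s
      · rw [if_pos hω, if_pos (hiff.mp hω)]; rfl
      · rw [if_neg hω, if_neg fun h => hω (hiff.mpr h)]
    have hrw : ∀ m : ℕ, ∫⁻ ω in s, ψ (ω m) ∂ν = ∫⁻ ω, g ω * ψ (ω m) ∂ν := by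
      intro m
      rw [← lintegral_indicator hsamb (fun ω => ψ (ω m))]
      refine lintegral_congr fun ω => ?_
      by_cases hω : ω ∈ s <;> simp [hgdef, Set.indicator, hω]
    rw [hrw j, hrw i, hν,
      Measure.lintegral_bind (f := fun ω => g ω * ψ (ω j)) hPmeas.aemeasurable (hgmeas.mul (hψev j)).aemeasurable,
      Measure.lintegral_bind (f := fun ω => g ω * ψ (ω i)) hPmeas.aemeasurable (hgmeas.mul (hψev i)).aemeasurable]
    refine lintegral_congr fun x => ?_
    have hlc := lemC i g hgmeas hgdep (j - i) x
    rwa [Nat.add_sub_cancel' hij] at hlc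
  -- martingale
  have hM1 : ∀ v : E, (ψ v).toReal ≤ 1 := by
    intro v
    have h := ENNReal.toReal_mono (by norm_num) (hψ1 v)
    simpa using h
  have hMnn : ∀ v : E, 0 ≤ (ψ v).toReal := fun v => ENNReal.toReal_nonneg
  have hMmeasF : ∀ n : ℕ, Measurable[(coordFiltration E) n]
      fun ω : ℕ → E => (ψ (ω n)).toReal := fun n =>
    (ENNReal.measurable_toReal.comp hψm).comp (hevalF n)
  have hMmeas : ∀ n : ℕ, Measurable fun ω : ℕ → E => (ψ (ω n)).toReal := fun n =>
    (ENNReal.measurable_toReal.comp hψm).comp (measurable_pi_apply n)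
  haveI : IsFiniteMeasure ν := by infer_instance
  have hMint : ∀ n : ℕ, Integrable (fun ω : ℕ → E => (ψ (ω n)).toReal) ν := by
    intro n
    refine ⟨(hMmeas n).aestronglyMeasurable, HasFiniteIntegral.of_bounded (C := 1) ?_⟩
    exact Eventually.of_forall fun ω => by
      rw [Real.norm_eq_abs, abs_of_nonneg (hMnn _)]; exact hM1 _
  refine ⟨harmonic, ⟨fun n => (hMmeasF n).stronglyMeasurable, ?_⟩,
    ⟨1, fun n ω => by rw [abs_of_nonneg (hMnn _)]; exact hM1 _⟩⟩
  intro i j hij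
  have hm : (coordFiltration E) i ≤ MeasurableSpace.pi := (coordFiltration E).le i
  refine (ae_eq_condExp_of_forall_setIntegral_eq hm (hMint j)
    (fun s hs hνs => (hMint i).integrableOn) ?_ ?_).symm
  · intro s hs hνs
    have conv : ∀ m : ℕ, ∫ ω in s, (ψ (ω m)).toReal ∂ν = (∫⁻ ω in s, ψ (ω m) ∂ν).toReal := by
      intro m
      rw [integral_toReal ((hψev m).aemeasurable)]
      exact Eventually.of_forall fun ω => lt_of_le_of_lt (hψ1 _) ENNReal.one_lt_top
    rw [conv i, conv j, hkey i j hij s hs]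
  · exact (hMmeasF i).stronglyMeasurable.aestronglyMeasurable
end

section
/- Let (Ω, ℱ, ℙ) be a probability space, let M ∈ ℱ with ℙ(M) > 0, and let α : M → (0, ∞) be an arbitrary (not necessarily measurable) function. Then there exist δ > 0 and δ̄ > 0 such that for every measurable set M̄ ⊆ M with ℙ(M̄) ≥ ℙ(M) − δ there exists a point ω ∈ M̄ with α(ω) > δ̄. -/
open MeasureTheory

/-- Let `(Ω, ℱ, ℙ)` be a probability space, `M` measurable with `ℙ(M) > 0`, and
`α` an arbitrary function that is positive on `M`. Then there exist `δ > 0` and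
`δ̄ > 0` such that every measurable `M̄ ⊆ M` with `ℙ(M̄) ≥ ℙ(M) - δ` contains a
point `ω` with `α(ω) > δ̄`. -/
theorem exists_delta_deltabar_of_pos_on_measurable
    {Ω : Type*} [MeasurableSpace Ω] (ℙ : Measure Ω) [IsProbabilityMeasure ℙ]
    (M : Set Ω) (hM : MeasurableSet M) (hMpos : 0 < ℙ M)
    (α : Ω → ℝ) (hα : ∀ ω ∈ M, 0 < α ω) :
    ∃ δ > (0 : ℝ), ∃ δbar > (0 : ℝ),
      ∀ Mbar : Set Ω, MeasurableSet Mbar → Mbar ⊆ M →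
        ℙ M - ENNReal.ofReal δ ≤ ℙ Mbar → ∃ ω ∈ Mbar, δbar < α ω := by
  set A : ℕ → Set Ω := fun n => {ω ∈ M | 1 / (n + 1 : ℝ) < α ω} with hA
  have hmono : Monotone A := by
    intro m n hmn ω hω
    refine ⟨hω.1, lt_of_le_of_lt ?_ hω.2⟩
    apply one_div_le_one_div_of_le (by positivity)
    exact_mod_cast add_le_add_left (Nat.cast_le.mpr hmn) 1
  have hU : (⋃ n, A n) = M := by
    ext ω
    simp only [Set.mem_iUnion, hA, Set.mem_setOf_eq]
    constructor
    · rintro ⟨n, h, _⟩; exact h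
    · intro hω
      obtain ⟨n, hn⟩ := exists_nat_one_div_lt (hα ω hω)
      exact ⟨n, hω, hn⟩
  have hsup : (⨆ n, ℙ (A n)) = ℙ M := by rw [← hU, hmono.measure_iUnion]
  have : ∃ n, 0 < ℙ (A n) := by
    by_contra h
    push_neg at h
    simp only [le_zero_iff] at h
    rw [← hsup] at hMpos
    simp [h] at hMpos
  obtain ⟨n, hn⟩ := this
  have hfin : ℙ (A n) ≠ ⊤ := measure_ne_top _ _
  have htr : 0 < (ℙ (A n)).toReal := ENNReal.toReal_pos hn.ne' hfin
  refine ⟨(ℙ (A n)).toReal / 2, by positivity, 1 / (n + 1 : ℝ), by positivity,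
    fun Mbar hMbar hsub hle => ?_⟩
  by_contra h
  push_neg at h
  have hdisj : A n ⊆ M \ Mbar := by
    intro ω hω
    refine ⟨hω.1, fun hmem => absurd hω.2 (not_lt.mpr (h ω hmem))⟩
  have h1 : ℙ (A n) ≤ ℙ M - ℙ Mbar := by
    calc ℙ (A n) ≤ ℙ (M \ Mbar) := measure_mono hdisj
    _ = ℙ M - ℙ Mbar := measure_diff hsub hMbar.nullMeasurableSet (measure_ne_top _ _)
  have h2 : ℙ M - ℙ Mbar ≤ ENNReal.ofReal ((ℙ (A n)).toReal / 2) := by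
    rw [tsub_le_iff_right]
    rw [tsub_le_iff_right] at hle
    rwa [add_comm] at hle
  have h3 : ENNReal.ofReal ((ℙ (A n)).toReal / 2) < ℙ (A n) := by
    rw [ENNReal.ofReal_lt_iff_lt_toReal (by positivity) hfin]
    linarith [ENNReal.toReal_pos hn.ne' hfin]
  exact absurd (h1.trans h2) (not_le.mpr h3)
end

section
/- Let I ⊆ [0,1] with λ*(I) = 1 and λ_*(I) = 0, let J := [0,1] \ I, and let E := E₁ ∪ E₂ be the disjoint union E₁ := {(x,1) : x ∈ I}, E₂ := {(x,2) : x ∈ J}, equipped with the metric d((x,i),(y,j)) = |x − y| if i = j and d((x,i),(y,j)) = 1 if i ≠ j. Define ρ : E × E → [0,1] by ρ((x,i),(y,j)) = |x − y|. Then: (E, d) is a separable metric space; ρ is continuous with respect to d; ρ is positive definite (ρ(p,q) = 0 iff p = q); and ρ is itself a metric on E under which (E, ρ) is a Polish space, isometric to the interval [0,1] with the Euclidean metric, whose topology differs from the topology generated by d. -/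
open MeasureTheory Topology

/-- The disjoint union `E = E₁ ∪ E₂` of (copies of) the sets `I` and `J`. -/
def Ecounter (I J : Set ℝ) : Type := ↥I ⊕ ↥J

/-- The real number underlying a point of `Ecounter I J`. -/
def valE {I J : Set ℝ} : Ecounter I J → ℝ := Sum.elim Subtype.val Subtype.val

/-- The metric `d` on `E`: `|x - y|` for points on the same side, `1` for
points on different sides. -/
def dE {I J : Set ℝ} (p q : Ecounter I J) : ℝ :=
  match p, q with
  | Sum.inl x, Sum.inl y => |(x : ℝ) - (y : ℝ)|
  | Sum.inr x, Sum.inr y => |(x : ℝ) - (y : ℝ)|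
  | _, _ => 1

/-- The function `ρ((x,i),(y,j)) = |x - y|` on `E × E`. -/
def rhoE {I J : Set ℝ} (p q : Ecounter I J) : ℝ := |valE p - valE q|


section Aux

variable {I J : Set ℝ}

lemma abs_le_one_mem {x y : ℝ} (hx : x ∈ Set.Icc (0:ℝ) 1) (hy : y ∈ Set.Icc (0:ℝ) 1) :
    |x - y| ≤ 1 :=
  abs_sub_le_iff.2 ⟨by linarith [hx.1, hx.2, hy.1, hy.2], by linarith [hx.1, hx.2, hy.1, hy.2]⟩

lemma valE_mem (hI : I ⊆ Set.Icc 0 1) (hJe : J = Set.Icc 0 1 \ I) (p : Ecounter I J) :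
    valE p ∈ Set.Icc (0:ℝ) 1 := by
  rcases p with a | a
  · exact hI a.2
  · have : (a:ℝ) ∈ Set.Icc 0 1 \ I := by rw [← hJe]; exact a.2
    exact this.1

lemma abs_valE_le (hI : I ⊆ Set.Icc 0 1) (hJe : J = Set.Icc 0 1 \ I) (p q : Ecounter I J) :
    |valE p - valE q| ≤ dE p q := by
  rcases p with a | a <;> rcases q with b | b
  · exact le_refl _
  · exact abs_le_one_mem (valE_mem hI hJe (Sum.inl a)) (valE_mem hI hJe (Sum.inr b))
  · exact abs_le_one_mem (valE_mem hI hJe (Sum.inr a)) (valE_mem hI hJe (Sum.inl b))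
  · exact le_refl _

lemma dE_self (p : Ecounter I J) : dE p p = 0 := by
  rcases p with a | a <;> simp [dE]

lemma dE_comm (p q : Ecounter I J) : dE p q = dE q p := by
  rcases p with a | a <;> rcases q with b | b <;> simp [dE, abs_sub_comm]

lemma dE_triangle (hI : I ⊆ Set.Icc 0 1) (hJe : J = Set.Icc 0 1 \ I) (p q r : Ecounter I J) :
    dE p r ≤ dE p q + dE q r := by
  rcases p with a | a <;> rcases q with b | b <;> rcases r with c | c
  · exact abs_sub_le _ _ _
  · show (1:ℝ) ≤ |(a:ℝ) - b| + 1; linarith [abs_nonneg ((a:ℝ) - b)]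
  · show |(a:ℝ) - c| ≤ 1 + 1
    linarith [abs_le_one_mem (hI a.2) (hI c.2)]
  · show (1:ℝ) ≤ 1 + |(b:ℝ) - c|; linarith [abs_nonneg ((b:ℝ) - c)]
  · show (1:ℝ) ≤ 1 + |(b:ℝ) - c|; linarith [abs_nonneg ((b:ℝ) - c)]
  · show |(a:ℝ) - c| ≤ 1 + 1
    have hJs : J ⊆ Set.Icc 0 1 := by rw [hJe]; exact Set.diff_subset
    linarith [abs_le_one_mem (hJs a.2) (hJs c.2)]
  · show (1:ℝ) ≤ |(a:ℝ) - b| + 1; linarith [abs_nonneg ((a:ℝ) - b)]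
  · exact abs_sub_le _ _ _

lemma dE_eq_zero (p q : Ecounter I J) (h : dE p q = 0) : p = q := by
  rcases p with a | a <;> rcases q with b | b
  · refine congrArg Sum.inl (Subtype.ext ?_)
    have h1 : |(a:ℝ) - b| = 0 := h
    have h2 := abs_eq_zero.1 h1
    linarith
  · exact absurd h one_ne_zero
  · exact absurd h one_ne_zero
  · refine congrArg Sum.inr (Subtype.ext ?_)
    have h1 : |(a:ℝ) - b| = 0 := h
    have h2 := abs_eq_zero.1 h1
    linarith

lemma rho_zero (hJe : J = Set.Icc 0 1 \ I) (p q : Ecounter I J) :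
    rhoE p q = 0 ↔ p = q := by
  constructor
  · intro h
    have hv : valE p = valE q := by
      have := abs_eq_zero.1 h; linarith
    rcases p with a | a <;> rcases q with b | b
    · exact congrArg Sum.inl (Subtype.ext hv)
    · exfalso
      have hb : (b:ℝ) ∈ Set.Icc 0 1 \ I := by rw [← hJe]; exact b.2
      have hv' : (a:ℝ) = (b:ℝ) := hv
      exact hb.2 (hv' ▸ a.2)
    · exfalso
      have ha : (a:ℝ) ∈ Set.Icc 0 1 \ I := by rw [← hJe]; exact a.2
      have hv' : (a:ℝ) = (b:ℝ) := hv
      exact ha.2 (hv'.symm ▸ b.2)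
    · exact congrArg Sum.inr (Subtype.ext hv)
  · rintro rfl; simp [rhoE]

def mE (hI : I ⊆ Set.Icc 0 1) (hJe : J = Set.Icc 0 1 \ I) : MetricSpace (Ecounter I J) where
  dist := dE
  dist_self := dE_self
  dist_comm := dE_comm
  dist_triangle := dE_triangle hI hJe
  eq_of_dist_eq_zero := dE_eq_zero _ _

def mRho (hJe : J = Set.Icc 0 1 \ I) : MetricSpace (Ecounter I J) where
  dist := rhoE
  dist_self p := by simp [rhoE]
  dist_comm p q := abs_sub_comm _ _
  dist_triangle p q r := abs_sub_le _ _ _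
  eq_of_dist_eq_zero := (rho_zero hJe _ _).1

end Aux

section Aux2
variable {I J : Set ℝ}

lemma separable_mE (hI : I ⊆ Set.Icc 0 1) (hJe : J = Set.Icc 0 1 \ I) :
    letI := mE hI hJe
    TopologicalSpace.SeparableSpace (Ecounter I J) := by
  letI := mE hI hJe
  obtain ⟨D₁, hc₁, hd₁⟩ := TopologicalSpace.exists_countable_dense ↥I
  obtain ⟨D₂, hc₂, hd₂⟩ := TopologicalSpace.exists_countable_dense ↥J
  refine ⟨⟨Sum.inl '' D₁ ∪ Sum.inr '' D₂, (hc₁.image _).union (hc₂.image _), ?_⟩⟩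
  rw [Metric.dense_iff]
  intro p r hr
  rcases p with a | a
  · obtain ⟨b, hball, hbD⟩ := Metric.dense_iff.1 hd₁ a r hr
    refine ⟨Sum.inl b, ?_, Or.inl ⟨b, hbD, rfl⟩⟩
    refine Metric.mem_ball.2 ?_
    show dE (Sum.inl b) (Sum.inl a) < r
    rw [Metric.mem_ball, Subtype.dist_eq, Real.dist_eq] at hball
    exact hball
  · obtain ⟨b, hball, hbD⟩ := Metric.dense_iff.1 hd₂ a r hr
    refine ⟨Sum.inr b, ?_, Or.inr ⟨b, hbD, rfl⟩⟩
    refine Metric.mem_ball.2 ?_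
    show dE (Sum.inr b) (Sum.inr a) < r
    rw [Metric.mem_ball, Subtype.dist_eq, Real.dist_eq] at hball
    exact hball

lemma rho_lip (hI : I ⊆ Set.Icc 0 1) (hJe : J = Set.Icc 0 1 \ I)
    (p p' q q' : Ecounter I J) :
    |rhoE p q - rhoE p' q'| ≤ dE p p' + dE q q' := by
  have h1 := abs_valE_le hI hJe p p'
  have h2 := abs_valE_le hI hJe q q'
  have key : ∀ a b c d : ℝ, |a - b| - |c - d| ≤ |a - c| + |b - d| := by
    intro a b c d
    have k1 := abs_sub_le a c b
    have k2 := abs_sub_le c d b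
    have k3 := abs_sub_comm d b
    linarith
  refine abs_sub_le_iff.2 ⟨?_, ?_⟩
  · have := key (valE p) (valE q) (valE p') (valE q')
    unfold rhoE
    linarith
  · have := key (valE p') (valE q') (valE p) (valE q)
    have c1 := abs_sub_comm (valE p') (valE p)
    have c2 := abs_sub_comm (valE q') (valE q)
    unfold rhoE
    linarith

lemma cont_rho (hI : I ⊆ Set.Icc 0 1) (hJe : J = Set.Icc 0 1 \ I) :
    letI := mE hI hJe
    Continuous (fun pq : Ecounter I J × Ecounter I J => rhoE pq.1 pq.2) := by
  letI := mE hI hJe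
  rw [Metric.continuous_iff]
  intro b ε hε
  refine ⟨ε/2, by linarith, fun a hab => ?_⟩
  have h1 : dist a.1 b.1 < ε/2 :=
    lt_of_le_of_lt (by rw [Prod.dist_eq]; exact le_max_left _ _) hab
  have h2 : dist a.2 b.2 < ε/2 :=
    lt_of_le_of_lt (by rw [Prod.dist_eq]; exact le_max_right _ _) hab
  have h1' : dE a.1 b.1 < ε/2 := h1
  have h2' : dE a.2 b.2 < ε/2 := h2
  have h3 := rho_lip hI hJe a.1 b.1 a.2 b.2
  rw [Real.dist_eq]
  linarith

open scoped Classical in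
noncomputable def eE (hI : I ⊆ Set.Icc 0 1) (hJe : J = Set.Icc 0 1 \ I) :
    Ecounter I J ≃ Set.Icc (0:ℝ) 1 where
  toFun p := ⟨valE p, valE_mem hI hJe p⟩
  invFun x := if h : (x:ℝ) ∈ I then Sum.inl ⟨x, h⟩
    else Sum.inr ⟨x, by rw [hJe]; exact ⟨x.2, h⟩⟩
  left_inv p := by
    rcases p with a | a
    · show (if h : (a:ℝ) ∈ I then _ else _) = _
      exact dif_pos a.2
    · have ha : (a:ℝ) ∉ I := by
        have : (a:ℝ) ∈ Set.Icc 0 1 \ I := by rw [← hJe]; exact a.2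
        exact this.2
      show (if h : (a:ℝ) ∈ I then _ else _) = _
      exact dif_neg ha
  right_inv x := by
    dsimp only
    by_cases h : (x:ℝ) ∈ I
    · exact Subtype.ext (congrArg valE (dif_pos h))
    · exact Subtype.ext (congrArg valE (dif_neg h))

lemma rho_eq_dist (hI : I ⊆ Set.Icc 0 1) (hJe : J = Set.Icc 0 1 \ I) (p q : Ecounter I J) :
    rhoE p q = dist (eE hI hJe p) (eE hI hJe q) := by
  rw [Subtype.dist_eq, Real.dist_eq]; rfl

noncomputable def isoE (hI : I ⊆ Set.Icc 0 1) (hJe : J = Set.Icc 0 1 \ I) :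
    letI := mRho (I := I) hJe
    Ecounter I J ≃ᵢ Set.Icc (0:ℝ) 1 :=
  letI := mRho (I := I) hJe
  { toEquiv := eE hI hJe
    isometry_toFun := Isometry.of_dist_eq fun p q => (rho_eq_dist hI hJe p q).symm }

lemma polish_rho (hI : I ⊆ Set.Icc 0 1) (hJe : J = Set.Icc 0 1 \ I) :
    letI := mRho (I := I) hJe
    PolishSpace (Ecounter I J) := by
  letI := mRho (I := I) hJe
  haveI : PolishSpace (Set.Icc (0:ℝ) 1) := isClosed_Icc.polishSpace
  exact (isoE hI hJe).toHomeomorph.isClosedEmbedding.polishSpace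

lemma isOpen_range_inl_mE (hI : I ⊆ Set.Icc 0 1) (hJe : J = Set.Icc 0 1 \ I) :
    IsOpen[(mE hI hJe).toUniformSpace.toTopologicalSpace]
      (Set.range (Sum.inl : ↥I → Ecounter I J)) := by
  letI := mE hI hJe
  rw [Metric.isOpen_iff]
  rintro p ⟨a, rfl⟩
  refine ⟨1, one_pos, fun q hq => ?_⟩
  rcases q with b | b
  · exact ⟨b, rfl⟩
  · exfalso
    replace hq := Metric.mem_ball.1 hq
    have : dE (Sum.inr b : Ecounter I J) (Sum.inl a) = 1 := rfl
    have hq' : dE (Sum.inr b : Ecounter I J) (Sum.inl a) < 1 := hq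
    linarith

lemma exists_open_of_isOpen_range (hI : I ⊆ Set.Icc 0 1) (hJe : J = Set.Icc 0 1 \ I)
    (h : IsOpen[(mRho (I := I) hJe).toUniformSpace.toTopologicalSpace]
      (Set.range (Sum.inl : ↥I → Ecounter I J))) :
    ∃ U : Set ℝ, IsOpen U ∧ I = U ∩ Set.Icc 0 1 := by
  letI := mRho (I := I) hJe
  have himg : (isoE hI hJe).toHomeomorph '' (Set.range (Sum.inl : ↥I → Ecounter I J))
      = Subtype.val ⁻¹' I := by
    ext x
    simp only [Set.mem_image, Set.mem_range, Set.mem_preimage]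
    constructor
    · rintro ⟨p, ⟨a, rfl⟩, rfl⟩
      exact a.2
    · intro hx
      exact ⟨Sum.inl ⟨(x:ℝ), hx⟩, ⟨_, rfl⟩, Subtype.ext rfl⟩
  have hopen2 : IsOpen (Subtype.val ⁻¹' I : Set (Set.Icc (0:ℝ) 1)) := by
    rw [← himg]
    exact (Homeomorph.isOpen_image _).2 h
  obtain ⟨U, hU, hUeq⟩ := isOpen_induced_iff.1 hopen2
  refine ⟨U, hU, ?_⟩
  ext x
  constructor
  · intro hx
    have hxI : (⟨x, hI hx⟩ : Set.Icc (0:ℝ) 1) ∈ Subtype.val ⁻¹' I := hx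
    rw [← hUeq] at hxI
    exact ⟨hxI, hI hx⟩
  · rintro ⟨hxU, hxIcc⟩
    have hmem : (⟨x, hxIcc⟩ : Set.Icc (0:ℝ) 1) ∈ Subtype.val ⁻¹' U := hxU
    rw [hUeq] at hmem
    exact hmem

end Aux2

/-- Let `I ⊆ [0,1]` with `λ*(I) = 1` and `λ_*(I) = 0`, `J := [0,1] \ I`, and let
`E` be the disjoint union of `I` and `J` with metric `d` (usual distance on
each side, `1` across sides) and `ρ(p,q) = |x_p - x_q|`. Then `(E,d)` is a
separable metric space, `ρ` is continuous for `d` and positive definite, and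
`ρ` is a metric on `E` making `E` a Polish space isometric to `[0,1]` with the
Euclidean metric, whose topology differs from the one generated by `d`. -/
theorem counterexample_space_properties
    (I : Set ℝ) (hI : I ⊆ Set.Icc 0 1)
    (houter : (volume.restrict (Set.Icc (0 : ℝ) 1)) I = 1)
    (hinner : (⨆ (B : Set ℝ) (_ : MeasurableSet B) (_ : B ⊆ I),
      (volume.restrict (Set.Icc (0 : ℝ) 1)) B) = 0)
    (J : Set ℝ) (hJ : J = Set.Icc 0 1 \ I) :
    ∃ m : MetricSpace (Ecounter I J),
      (∀ p q, m.dist p q = dE p q) ∧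
      (letI := m
       TopologicalSpace.SeparableSpace (Ecounter I J) ∧
       Continuous (fun pq : Ecounter I J × Ecounter I J => rhoE pq.1 pq.2)) ∧
      (∀ p q : Ecounter I J, rhoE p q = 0 ↔ p = q) ∧
      ∃ mρ : MetricSpace (Ecounter I J),
        (∀ p q, mρ.dist p q = rhoE p q) ∧
        (letI := mρ
         PolishSpace (Ecounter I J)) ∧
        (∃ e : Ecounter I J ≃ Set.Icc (0 : ℝ) 1,
          ∀ p q, rhoE p q = dist (e p) (e q)) ∧
        m.toUniformSpace.toTopologicalSpace ≠ mρ.toUniformSpace.toTopologicalSpace := by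
  refine ⟨mE hI hJ, fun p q => rfl,
    ⟨separable_mE hI hJ, cont_rho hI hJ⟩,
    fun p q => rho_zero hJ p q,
    mRho (I := I) hJ, fun p q => rfl,
    polish_rho hI hJ,
    ⟨eE hI hJ, rho_eq_dist hI hJ⟩, ?_⟩
  intro heq
  have hopen1 : IsOpen[(mE hI hJ).toUniformSpace.toTopologicalSpace]
      (Set.range (Sum.inl : ↥I → Ecounter I J)) := isOpen_range_inl_mE hI hJ
  rw [heq] at hopen1
  obtain ⟨U, hU, hUI⟩ := exists_open_of_isOpen_range hI hJ hopen1
  have hmeas : MeasurableSet I := by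
    rw [hUI]; exact hU.measurableSet.inter measurableSet_Icc
  have h1 : (volume.restrict (Set.Icc (0:ℝ) 1)) I ≤ 0 := by
    rw [← hinner]
    exact le_iSup_of_le I (le_iSup_of_le hmeas (le_iSup_of_le (subset_refl I) le_rfl))
  rw [houter] at h1
  simp at h1
end
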